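/- arXiv:1707.03002 — 4 statements merged into one kernel-verified Lean document; each statement's English description precedes it below -/
import Mathlib

section
/- Let n ≥ 4 and let R be an algebraic curvature operator on ℝⁿ with nonnegative complex sectional curvature (weakly PIC₂). If v ∈ so(n,ℂ) satisfies rank(v) = 2, |v| = 1 and R(v,v̄) = 0, then −tr(Ric · v · v̄) ≤ scal/2. -/
open Matrix BigOperators Finset

/-- An algebraic curvature operator on ℝⁿ: symmetries and first Bianchi identity. -/
def IsCurvOp (n : ℕ) (R : Fin n → Fin n → Fin n → Fin n → ℝ) : Prop :=
  (∀ i j k l, R i j k l = - R j i k l) ∧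
  (∀ i j k l, R i j k l = - R i j l k) ∧
  (∀ i j k l, R i j k l = R k l i j) ∧
  (∀ i j k l, R i j k l + R j k i l + R k i j l = 0)

/-- The complex-bilinear extension of the curvature form to `so(n,ℂ)`. -/
noncomputable def rformC {n : ℕ} (R : Fin n → Fin n → Fin n → Fin n → ℝ)
    (v w : Matrix (Fin n) (Fin n) ℂ) : ℂ :=
  (1/4) * ∑ i, ∑ j, ∑ k, ∑ l, (R i j k l : ℂ) * v i j * w k l

/-- The Ricci tensor of a curvature operator. -/
noncomputable def ricci {n : ℕ} (R : Fin n → Fin n → Fin n → Fin n → ℝ) :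
    Matrix (Fin n) (Fin n) ℝ :=
  Matrix.of fun a b => ∑ i, R i a i b

/-- The scalar curvature of a curvature operator. -/
noncomputable def scal {n : ℕ} (R : Fin n → Fin n → Fin n → Fin n → ℝ) : ℝ :=
  ∑ a, ricci R a a

/-- Entrywise complex conjugate of a matrix. -/
noncomputable def mconj {n : ℕ} (v : Matrix (Fin n) (Fin n) ℂ) : Matrix (Fin n) (Fin n) ℂ :=
  v.map (starRingEnd ℂ)

namespace Stmt2Aux

variable {n : ℕ}

/-- wedge of two vectors -/
def wedge (x y : Fin n → ℂ) : Matrix (Fin n) (Fin n) ℂ :=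
  Matrix.of fun i j => x i * y j - y i * x j

/-- conjugate vector -/
def cVec (x : Fin n → ℂ) : Fin n → ℂ := fun i => (starRingEnd ℂ) (x i)

noncomputable def Sform (R : Fin n → Fin n → Fin n → Fin n → ℝ) (x y u t : Fin n → ℂ) : ℂ :=
  ∑ i, ∑ j, ∑ k, ∑ l, (R i j k l : ℂ) * x i * y j * u k * t l

lemma quad_swap12 (g : Fin n → Fin n → Fin n → Fin n → ℂ) :
    (∑ i, ∑ j, ∑ k, ∑ l, g i j k l) = ∑ i, ∑ j, ∑ k, ∑ l, g j i k l :=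
  Finset.sum_comm

lemma quad_swap34 (g : Fin n → Fin n → Fin n → Fin n → ℂ) :
    (∑ i, ∑ j, ∑ k, ∑ l, g i j k l) = ∑ i, ∑ j, ∑ k, ∑ l, g i j l k :=
  Finset.sum_congr rfl fun i _ => Finset.sum_congr rfl fun j _ => Finset.sum_comm

lemma mconj_wedge (x y : Fin n → ℂ) : mconj (wedge x y) = wedge (cVec x) (cVec y) := by
  ext i j
  simp [mconj, wedge, cVec]

lemma wedge_transpose (x y : Fin n → ℂ) : (wedge x y)ᵀ = -(wedge x y) := by
  ext i j
  simp [wedge, Matrix.transpose_apply]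
  ring

lemma rformC_wedge {R : Fin n → Fin n → Fin n → Fin n → ℝ} (hR : IsCurvOp n R)
    (x y u t : Fin n → ℂ) :
    rformC R (wedge x y) (wedge u t) = Sform R x y u t := by
  have congr4 : ∀ (g h : Fin n → Fin n → Fin n → Fin n → ℂ), (∀ i j k l, g i j k l = h i j k l) →
      (∑ i, ∑ j, ∑ k, ∑ l, g i j k l) = ∑ i, ∑ j, ∑ k, ∑ l, h i j k l := by
    intro g h hgh
    exact Finset.sum_congr rfl fun i _ => Finset.sum_congr rfl fun j _ =>
      Finset.sum_congr rfl fun k _ => Finset.sum_congr rfl fun l _ => hgh i j k l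
  have hsplit : (∑ i, ∑ j, ∑ k, ∑ l, (R i j k l : ℂ) * wedge x y i j * wedge u t k l)
      = (∑ i, ∑ j, ∑ k, ∑ l, ((R i j k l : ℂ) * x i * y j * u k * t l
      - (R i j k l : ℂ) * y i * x j * u k * t l
      - (R i j k l : ℂ) * x i * y j * t k * u l
      + (R i j k l : ℂ) * y i * x j * t k * u l)) := by
    refine congr4 _ _ fun i j k l => ?_
    simp only [wedge, Matrix.of_apply]
    ring
  have h2 : (∑ i, ∑ j, ∑ k, ∑ l, (R i j k l : ℂ) * y i * x j * u k * t l)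
      = - Sform R x y u t := by
    rw [quad_swap12]
    rw [Sform, ← Finset.sum_neg_distrib]
    simp only [← Finset.sum_neg_distrib]
    refine congr4 _ _ fun i j k l => ?_
    rw [hR.1 j i k l]
    push_cast
    ring
  have h3 : (∑ i, ∑ j, ∑ k, ∑ l, (R i j k l : ℂ) * x i * y j * t k * u l)
      = - Sform R x y u t := by
    rw [quad_swap34]
    rw [Sform, ← Finset.sum_neg_distrib]
    simp only [← Finset.sum_neg_distrib]
    refine congr4 _ _ fun i j k l => ?_
    rw [hR.2.1 i j l k]
    push_cast
    ring
  have h4 : (∑ i, ∑ j, ∑ k, ∑ l, (R i j k l : ℂ) * y i * x j * t k * u l)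
      = Sform R x y u t := by
    rw [quad_swap12, quad_swap34]
    rw [Sform]
    refine congr4 _ _ fun i j k l => ?_
    rw [hR.1 j i l k, hR.2.1 i j l k]
    push_cast
    ring
  have hsum : (∑ i, ∑ j, ∑ k, ∑ l, (R i j k l : ℂ) * wedge x y i j * wedge u t k l)
      = 4 * Sform R x y u t := by
    rw [hsplit]
    simp only [Finset.sum_add_distrib, Finset.sum_sub_distrib]
    rw [h2, h3, h4, Sform]
    ring
  rw [rformC, hsum]
  ring

lemma keysum (b : Fin n → Fin n → ℂ)
    (hb : ∀ i k, (∑ α, b α i * (starRingEnd ℂ) (b α k)) = if i = k then 1 else 0)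
    (T : Fin n → Fin n → ℂ) :
    (∑ α, ∑ i, ∑ k, b α i * (starRingEnd ℂ) (b α k) * T i k) = ∑ i, T i i := by
  rw [Finset.sum_comm]
  have : ∀ i : Fin n, (∑ α, ∑ k, b α i * (starRingEnd ℂ) (b α k) * T i k)
      = ∑ k, (∑ α, b α i * (starRingEnd ℂ) (b α k)) * T i k := by
    intro i
    rw [Finset.sum_comm]
    exact Finset.sum_congr rfl fun k _ => (Finset.sum_mul _ _ _).symm
  simp only [this, hb, ite_mul, one_mul, zero_mul]
  refine Finset.sum_congr rfl fun i _ => ?_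
  rw [Finset.sum_ite_eq _ i (fun k => T i k)]
  simp


lemma Sform_regroup (R : Fin n → Fin n → Fin n → Fin n → ℝ) (x y u t : Fin n → ℂ) :
    Sform R x y u t = ∑ i, ∑ k, x i * u k * (∑ j, ∑ l, (R i j k l : ℂ) * (y j * t l)) := by
  rw [Sform]
  refine Finset.sum_congr rfl fun i _ => ?_
  rw [Finset.sum_comm]
  refine Finset.sum_congr rfl fun k _ => ?_
  rw [Finset.mul_sum]
  refine Finset.sum_congr rfl fun j _ => ?_
  rw [Finset.mul_sum]
  refine Finset.sum_congr rfl fun l _ => ?_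
  ring



lemma ric_sum (R : Fin n → Fin n → Fin n → Fin n → ℝ) (b : Fin n → Fin n → ℂ)
    (hb : ∀ i k, (∑ α, b α i * (starRingEnd ℂ) (b α k)) = if i = k then 1 else 0)
    (y t : Fin n → ℂ) :
    (∑ α, Sform R (b α) y (cVec (b α)) t)
      = ∑ j, ∑ l, ((ricci R j l : ℝ) : ℂ) * (y j * t l) := by
  have h1 : (∑ α, Sform R (b α) y (cVec (b α)) t)
      = ∑ α, ∑ i, ∑ k, b α i * (starRingEnd ℂ) (b α k) * (∑ j, ∑ l, (R i j k l : ℂ) * (y j * t l)) := by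
    exact Finset.sum_congr rfl fun α _ => Sform_regroup R (b α) y (cVec (b α)) t
  rw [h1, keysum b hb]
  rw [Finset.sum_comm]
  refine Finset.sum_congr rfl fun j _ => ?_
  rw [Finset.sum_comm]
  refine Finset.sum_congr rfl fun l _ => ?_
  rw [← Finset.sum_mul]
  congr 1
  rw [ricci]
  push_cast
  simp

lemma scal_sum (R : Fin n → Fin n → Fin n → Fin n → ℝ) (b : Fin n → Fin n → ℂ)
    (hb : ∀ i k, (∑ α, b α i * (starRingEnd ℂ) (b α k)) = if i = k then 1 else 0) :
    (∑ α, ∑ β, Sform R (b α) (b β) (cVec (b α)) (cVec (b β))) = ((scal R : ℝ) : ℂ) := by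
  rw [Finset.sum_comm]
  have h1 : ∀ β, (∑ α, Sform R (b α) (b β) (cVec (b α)) (cVec (b β)))
      = ∑ j, ∑ l, ((ricci R j l : ℝ) : ℂ) * (b β j * (starRingEnd ℂ) (b β l)) :=
    fun β => ric_sum R b hb (b β) (cVec (b β))
  simp only [h1]
  have h2 : (∑ β, ∑ j, ∑ l, ((ricci R j l : ℝ) : ℂ) * (b β j * (starRingEnd ℂ) (b β l)))
      = ∑ β, ∑ j, ∑ l, b β j * (starRingEnd ℂ) (b β l) * ((ricci R j l : ℝ) : ℂ) := by
    refine Finset.sum_congr rfl fun β _ => Finset.sum_congr rfl fun j _ =>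
      Finset.sum_congr rfl fun l _ => by ring
  rw [h2, keysum b hb]
  rw [scal]
  push_cast
  rfl

lemma exists_dual {x y : Fin n → ℂ} (h : LinearIndependent ℂ ![x, y]) :
    ∃ c : Fin n → ℂ, (∑ j, c j * x j) = 1 ∧ (∑ j, c j * y j) = 0 := by
  have hxy : x ≠ y := by
    intro he
    obtain ⟨h1, -⟩ := LinearIndependent.pair_iff.mp h 1 (-1) (by rw [he]; module)
    exact one_ne_zero h1
  have hs : LinearIndepOn ℂ id (Set.range ![x, y]) :=
    h.linearIndepOn_id
  let B := Module.Basis.extend hs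
  have hxmem : x ∈ hs.extend (Set.subset_univ _) :=
    hs.subset_extend _ ⟨0, rfl⟩
  have hymem : y ∈ hs.extend (Set.subset_univ _) :=
    hs.subset_extend _ ⟨1, rfl⟩
  let f : (Fin n → ℂ) →ₗ[ℂ] ℂ := B.coord ⟨x, hxmem⟩
  have hfx : f x = 1 := by
    have : B ⟨x, hxmem⟩ = x := Module.Basis.extend_apply_self hs ⟨x, hxmem⟩
    rw [← this]
    simp [f, Module.Basis.coord_apply, Module.Basis.repr_self]
  have hfy : f y = 0 := by
    have hy : B ⟨y, hymem⟩ = y := Module.Basis.extend_apply_self hs ⟨y, hymem⟩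
    rw [← hy]
    simp only [f, Module.Basis.coord_apply, Module.Basis.repr_self]
    have : (⟨y, hymem⟩ : hs.extend (Set.subset_univ _)) ≠ ⟨x, hxmem⟩ := by
      intro he
      have := congrArg Subtype.val he
      exact hxy this.symm
    simp [Finsupp.single_eq_of_ne this.symm]
  refine ⟨fun j => f (Pi.single j 1 : (Fin n → ℂ)), ?_, ?_⟩
  · have hx : x = ∑ j, x j • (Pi.single j 1 : Fin n → ℂ) := by
      funext i
      simp [Finset.sum_apply, Pi.single_apply]
    calc (∑ j, f (Pi.single j 1 : (Fin n → ℂ)) * x j) = f (∑ j, x j • (Pi.single j 1 : Fin n → ℂ)) := by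
          rw [map_sum]
          exact Finset.sum_congr rfl fun j _ => by rw [LinearMap.map_smul]; simp; ring
      _ = 1 := by rw [← hx, hfx]
  · have hy : y = ∑ j, y j • (Pi.single j 1 : Fin n → ℂ) := by
      funext i
      simp [Finset.sum_apply, Pi.single_apply]
    calc (∑ j, f (Pi.single j 1 : (Fin n → ℂ)) * y j) = f (∑ j, y j • (Pi.single j 1 : Fin n → ℂ)) := by
          rw [map_sum]
          exact Finset.sum_congr rfl fun j _ => by rw [LinearMap.map_smul]; simp; ring
      _ = 0 := by rw [← hy, hfy]

lemma wedge_mulVec (x y u : Fin n → ℂ) :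
    (wedge x y).mulVec u = (∑ j, y j * u j) • x - (∑ j, x j * u j) • y := by
  funext i
  simp only [Matrix.mulVec, dotProduct, wedge, Matrix.of_apply, Pi.sub_apply,
    Pi.smul_apply, smul_eq_mul]
  rw [Finset.sum_mul, Finset.sum_mul, ← Finset.sum_sub_distrib]
  refine Finset.sum_congr rfl fun j _ => by ring

lemma pair_swap {x y : Fin n → ℂ} (h : LinearIndependent ℂ ![x, y]) :
    LinearIndependent ℂ ![y, x] := by
  rw [LinearIndependent.pair_iff] at h ⊢
  intro s r hsr
  obtain ⟨h1, h2⟩ := h r s (by rw [← hsr]; module)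
  exact ⟨h2, h1⟩

lemma range_wedge {x y : Fin n → ℂ} (h : LinearIndependent ℂ ![x, y]) :
    LinearMap.range (wedge x y).mulVecLin = Submodule.span ℂ {x, y} := by
  apply le_antisymm
  · rintro - ⟨u, rfl⟩
    rw [Matrix.mulVecLin_apply, wedge_mulVec]
    exact Submodule.sub_mem _
      (Submodule.smul_mem _ _ (Submodule.subset_span (Set.mem_insert _ _)))
      (Submodule.smul_mem _ _ (Submodule.subset_span (Set.mem_insert_of_mem _ rfl)))
  · rw [Submodule.span_le]
    rintro t (rfl | rfl)
    · obtain ⟨c, hc1, hc0⟩ := exists_dual (pair_swap h)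
      refine ⟨c, ?_⟩
      rw [Matrix.mulVecLin_apply, wedge_mulVec]
      have e1 : (∑ j, y j * c j) = 1 := by
        rw [← hc1]; exact Finset.sum_congr rfl fun j _ => by ring
      have e2 : (∑ j, t j * c j) = 0 := by
        rw [← hc0]; exact Finset.sum_congr rfl fun j _ => by ring
      rw [e1, e2]
      module
    · obtain ⟨c, hc1, hc0⟩ := exists_dual h
      refine ⟨-c, ?_⟩
      rw [Matrix.mulVecLin_apply, wedge_mulVec]
      have e1 : (∑ j, t j * (-c) j) = 0 := by
        rw [show (0 : ℂ) = -(0:ℂ) by ring, ← hc0, ← Finset.sum_neg_distrib]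
        exact Finset.sum_congr rfl fun j _ => by simp; ring
      have e2 : (∑ j, x j * (-c) j) = -1 := by
        rw [show (-1 : ℂ) = -(1:ℂ) by ring, ← hc1, ← Finset.sum_neg_distrib]
        exact Finset.sum_congr rfl fun j _ => by simp; ring
      rw [e1, e2]
      module

lemma range_pair_eq {x y : Fin n → ℂ} : ({x, y} : Set (Fin n → ℂ)) = Set.range ![x, y] := by
  ext t
  constructor
  · rintro (rfl | rfl)
    exacts [⟨0, rfl⟩, ⟨1, rfl⟩]
  · rintro ⟨i, rfl⟩
    fin_cases i
    · exact Or.inl rfl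
    · exact Or.inr rfl

lemma rank_wedge {x y : Fin n → ℂ} (h : LinearIndependent ℂ ![x, y]) :
    (wedge x y).rank = 2 := by
  rw [Matrix.rank, range_wedge h, range_pair_eq, finrank_span_eq_card h]
  simp

lemma col_mem_range (v : Matrix (Fin n) (Fin n) ℂ) (j : Fin n) :
    (fun i => v i j) ∈ LinearMap.range v.mulVecLin := by
  refine ⟨Pi.single j 1, ?_⟩
  rw [Matrix.mulVecLin_apply, Matrix.mulVec_single]
  funext i
  simp

lemma skew_diag {v : Matrix (Fin n) (Fin n) ℂ} (hskew : vᵀ = -v) (p : Fin n) : v p p = 0 := by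
  have := congrFun (congrFun hskew p) p
  simp only [Matrix.transpose_apply, Matrix.neg_apply] at this
  linear_combination this / 2 + v p p / 2 - v p p / 2

lemma skew_entry {v : Matrix (Fin n) (Fin n) ℂ} (hskew : vᵀ = -v) (p q : Fin n) :
    v p q = - v q p := by
  have := congrFun (congrFun hskew q) p
  simpa [Matrix.transpose_apply] using this

lemma exists_wedge {v : Matrix (Fin n) (Fin n) ℂ} (hskew : vᵀ = -v) (hrank : v.rank = 2) :
    ∃ z w : Fin n → ℂ, v = wedge z w ∧ LinearIndependent ℂ ![z, w] := by
  -- v ≠ 0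
  have hv0 : v ≠ 0 := by
    intro hv
    rw [hv, Matrix.rank_zero] at hrank
    norm_num at hrank
  -- some column is nonzero
  have hcol : ∃ p, (fun i => v i p) ≠ 0 := by
    by_contra hall
    push_neg at hall
    apply hv0
    ext i j
    have := congrFun (hall j) i
    simpa using this
  obtain ⟨p, hp⟩ := hcol
  -- some column is not in the span of column p
  have hcol2 : ∃ q, (fun i => v i q) ∉ Submodule.span ℂ {(fun i => v i p)} := by
    by_contra hall
    push_neg at hall
    have hle : LinearMap.range v.mulVecLin ≤ Submodule.span ℂ {(fun i => v i p)} := by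
      rw [Matrix.range_mulVecLin, Submodule.span_le]
      rintro - ⟨j, rfl⟩
      exact hall j
    have h2 : (2 : ℕ) ≤ 1 := by
      calc (2:ℕ) = v.rank := hrank.symm
        _ ≤ Module.finrank ℂ (Submodule.span ℂ {(fun i => v i p)}) := by
            rw [Matrix.rank]
            exact Submodule.finrank_mono hle
        _ = 1 := finrank_span_singleton hp
    norm_num at h2
  obtain ⟨q, hq⟩ := hcol2
  -- the two columns are independent
  have hind : LinearIndependent ℂ ![(fun i => v i p), (fun i => v i q)] := by
    rw [LinearIndependent.pair_iff]
    intro s t hst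
    have ht : t = 0 := by
      by_contra ht
      apply hq
      rw [Submodule.mem_span_singleton]
      refine ⟨-s/t, ?_⟩
      funext i
      have := congrFun hst i
      simp only [Pi.add_apply, Pi.smul_apply, smul_eq_mul, Pi.zero_apply] at this ⊢
      field_simp
      linear_combination -this
    refine ⟨?_, ht⟩
    subst ht
    simp only [zero_smul, add_zero] at hst
    by_contra hs
    apply hp
    funext i
    have := congrFun hst i
    simp only [Pi.smul_apply, smul_eq_mul, Pi.zero_apply] at this
    exact (mul_eq_zero.mp this).resolve_left hs
  -- span of the two columns equals the range
  have hspan : Submodule.span ℂ {(fun i => v i p), (fun i => v i q)}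
      = LinearMap.range v.mulVecLin := by
    apply Submodule.eq_of_le_of_finrank_le
    · rw [Submodule.span_le]
      rintro t (rfl | rfl)
      exacts [col_mem_range v p, col_mem_range v q]
    · rw [show LinearMap.range v.mulVecLin = _ from rfl]
      have : Module.finrank ℂ (LinearMap.range v.mulVecLin) = 2 := hrank
      rw [this, range_pair_eq, finrank_span_eq_card hind]
      simp
  -- every column is a combination of columns p and q
  have hcols : ∀ j, ∃ a b : ℂ, ∀ i, v i j = a * v i p + b * v i q := by
    intro j
    have : (fun i => v i j) ∈ Submodule.span ℂ {(fun i => v i p), (fun i => v i q)} := by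
      rw [hspan]; exact col_mem_range v j
    obtain ⟨a, b, hab⟩ := Submodule.mem_span_pair.mp this
    exact ⟨a, b, fun i => by
      have := congrFun hab i
      simp only [Pi.add_apply, Pi.smul_apply, smul_eq_mul] at this
      exact this.symm⟩
  -- v p q ≠ 0
  have hpq : v p q ≠ 0 := by
    intro hpq0
    apply hp
    funext i
    obtain ⟨a, b, hab⟩ := hcols i
    have h1 : v p i = b * v p q := by
      have := hab p
      rw [skew_diag hskew p] at this
      simpa using this
    have h2 : v i p = - v p i := skew_entry hskew i p
    simp only [Pi.zero_apply]
    rw [h2, h1, hpq0]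
    ring
  -- conclude
  refine ⟨fun i => v i p / v p q, fun i => v i q, ?_, ?_⟩
  · ext i j
    obtain ⟨a, b, hab⟩ := hcols j
    have ha : v q j = - a * v p q := by
      have := hab q
      rw [skew_diag hskew q, show v q p = - v p q from skew_entry hskew q p] at this
      linear_combination this
    have hb : v p j = b * v p q := by
      have := hab p
      rw [skew_diag hskew p] at this
      simpa using this
    have hij := hab i
    have key : v i j * v p q = v i p * v j q - v i q * v j p := by
      rw [show v j q = - v q j from skew_entry hskew j q,
        show v j p = - v p j from skew_entry hskew j p]
      linear_combination v p q * hij + v i p * ha - v i q * hb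
    simp only [wedge, Matrix.of_apply]
    have hrw : v i p / v p q * v j q - v i q * (v j p / v p q)
        = (v i p * v j q - v i q * v j p) / v p q := by ring
    rw [hrw, ← key, mul_div_cancel_right₀ _ hpq]
  · rw [LinearIndependent.pair_iff] at hind ⊢
    intro s t hst
    have h0 := hind (s / v p q) t (by
      funext i
      have := congrFun hst i
      simp only [Pi.add_apply, Pi.smul_apply, smul_eq_mul, Pi.zero_apply] at this ⊢
      linear_combination this)
    refine ⟨?_, h0.2⟩
    have h1 := h0.1
    rw [div_eq_zero_iff] at h1
    exact h1.resolve_right hpq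

lemma sum_conj_self_pos {z : Fin n → ℂ} (hz : z ≠ 0) :
    0 < ∑ i, Complex.normSq (z i) := by
  have : ∃ i, z i ≠ 0 := by
    by_contra hall
    push_neg at hall
    exact hz (funext fun i => hall i)
  obtain ⟨i, hi⟩ := this
  refine Finset.sum_pos' (fun j _ => Complex.normSq_nonneg _) ⟨i, Finset.mem_univ i, ?_⟩
  exact Complex.normSq_pos.mpr hi

lemma sum_conj_mul_self (z : Fin n → ℂ) :
    (∑ i, (starRingEnd ℂ) (z i) * z i) = ((∑ i, Complex.normSq (z i) : ℝ) : ℂ) := by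
  push_cast
  refine Finset.sum_congr rfl fun i _ => ?_
  rw [mul_comm, Complex.mul_conj]

lemma orthonormalize {z w : Fin n → ℂ} (hind : LinearIndependent ℂ ![z, w]) :
    ∃ (e1 e2 : Fin n → ℂ) (c : ℝ), 0 < c ∧ wedge z w = (c : ℂ) • wedge e1 e2 ∧
      (∑ i, (starRingEnd ℂ) (e1 i) * e1 i) = 1 ∧
      (∑ i, (starRingEnd ℂ) (e2 i) * e2 i) = 1 ∧
      (∑ i, (starRingEnd ℂ) (e1 i) * e2 i) = 0 := by
  have hz0 : z ≠ 0 := by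
    intro h
    obtain ⟨h1, -⟩ := LinearIndependent.pair_iff.mp hind 1 0 (by rw [h]; module)
    exact one_ne_zero h1
  set a : ℝ := ∑ i, Complex.normSq (z i) with ha_def
  have ha : 0 < a := sum_conj_self_pos hz0
  set sa : ℝ := Real.sqrt a with hsa_def
  have hsa : 0 < sa := Real.sqrt_pos.mpr ha
  have hsa2 : sa * sa = a := Real.mul_self_sqrt ha.le
  set e1 : Fin n → ℂ := fun i => (sa : ℂ)⁻¹ * z i with he1_def
  have hsaC : ((sa : ℝ) : ℂ) ≠ 0 := by
    simpa using hsa.ne'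
  have he1 : (∑ i, (starRingEnd ℂ) (e1 i) * e1 i) = 1 := by
    have h1 : (∑ i, (starRingEnd ℂ) (e1 i) * e1 i)
        = ((sa:ℂ)⁻¹ * (starRingEnd ℂ) (((sa:ℂ))⁻¹)) * ∑ i, (starRingEnd ℂ) (z i) * z i := by
      rw [Finset.mul_sum]
      refine Finset.sum_congr rfl fun i _ => ?_
      simp only [he1_def, _root_.map_mul]
      ring
    rw [h1, sum_conj_mul_self, ← ha_def, map_inv₀, Complex.conj_ofReal,
      show ((a:ℝ):ℂ) = (sa:ℂ)*(sa:ℂ) from by rw [← hsa2]; push_cast; ring]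
    field_simp
  set μ : ℂ := ∑ i, (starRingEnd ℂ) (e1 i) * w i with hμ_def
  set w1 : Fin n → ℂ := fun i => w i - μ * e1 i with hw1_def
  have hw10 : w1 ≠ 0 := by
    intro h
    have hrel : (μ * (sa:ℂ)⁻¹) • z + (-1 : ℂ) • w = 0 := by
      funext i
      have := congrFun h i
      simp only [hw1_def, Pi.zero_apply] at this
      simp only [Pi.add_apply, Pi.smul_apply, smul_eq_mul, Pi.zero_apply]
      simp only [he1_def] at this
      linear_combination -this
    obtain ⟨-, h2⟩ := LinearIndependent.pair_iff.mp hind _ _ hrel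
    simpa using h2
  set b : ℝ := ∑ i, Complex.normSq (w1 i) with hb_def
  have hb : 0 < b := sum_conj_self_pos hw10
  set sb : ℝ := Real.sqrt b with hsb_def
  have hsb : 0 < sb := Real.sqrt_pos.mpr hb
  have hsb2 : sb * sb = b := Real.mul_self_sqrt hb.le
  have hsbC : ((sb : ℝ) : ℂ) ≠ 0 := by simpa using hsb.ne'
  set e2 : Fin n → ℂ := fun i => (sb : ℂ)⁻¹ * w1 i with he2_def
  have he2 : (∑ i, (starRingEnd ℂ) (e2 i) * e2 i) = 1 := by
    have h1 : (∑ i, (starRingEnd ℂ) (e2 i) * e2 i)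
        = ((sb:ℂ)⁻¹ * (starRingEnd ℂ) (((sb:ℂ))⁻¹)) * ∑ i, (starRingEnd ℂ) (w1 i) * w1 i := by
      rw [Finset.mul_sum]
      refine Finset.sum_congr rfl fun i _ => ?_
      simp only [he2_def, _root_.map_mul]
      ring
    rw [h1, sum_conj_mul_self, ← hb_def, map_inv₀, Complex.conj_ofReal,
      show ((b:ℝ):ℂ) = (sb:ℂ)*(sb:ℂ) from by rw [← hsb2]; push_cast; ring]
    field_simp
  have he12 : (∑ i, (starRingEnd ℂ) (e1 i) * e2 i) = 0 := by
    have h1 : (∑ i, (starRingEnd ℂ) (e1 i) * e2 i)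
        = (sb:ℂ)⁻¹ * (∑ i, (starRingEnd ℂ) (e1 i) * w i)
          - (sb:ℂ)⁻¹ * μ * (∑ i, (starRingEnd ℂ) (e1 i) * e1 i) := by
      have hpt : ∀ i, (starRingEnd ℂ) (e1 i) * e2 i
          = (sb:ℂ)⁻¹ * ((starRingEnd ℂ) (e1 i) * w i)
            - (sb:ℂ)⁻¹ * μ * ((starRingEnd ℂ) (e1 i) * e1 i) := by
        intro i
        simp only [he2_def, hw1_def]
        ring
      simp only [hpt]
      rw [Finset.sum_sub_distrib, ← Finset.mul_sum, ← Finset.mul_sum]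
    rw [h1, he1, ← hμ_def]
    ring
  refine ⟨e1, e2, sa * sb, mul_pos hsa hsb, ?_, he1, he2, he12⟩
  ext i j
  simp only [wedge, Matrix.of_apply, Matrix.smul_apply, smul_eq_mul]
  simp only [he2_def, he1_def, hw1_def]
  push_cast
  field_simp
  ring


lemma skew_full_norm {v : Matrix (Fin n) (Fin n) ℂ} (hskew : vᵀ = -v) :
    (∑ i, ∑ j, Complex.normSq (v i j))
      = 2 * ∑ i, ∑ j, (if i < j then Complex.normSq (v i j) else 0) := by
  have hpt : ∀ i j : Fin n, Complex.normSq (v i j)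
      = (if i < j then Complex.normSq (v i j) else 0)
        + ((if j < i then Complex.normSq (v i j) else 0)
        + (if i = j then Complex.normSq (v i j) else 0)) := by
    intro i j
    rcases lt_trichotomy i j with h | h | h
    · simp [h, not_lt.mpr h.le, h.ne]
    · simp [h, lt_irrefl]
    · simp [h, not_lt.mpr h.le, h.ne']
  have hsplit : (∑ i, ∑ j, Complex.normSq (v i j))
      = (∑ i, ∑ j, (if i < j then Complex.normSq (v i j) else 0))
        + ((∑ i, ∑ j, (if j < i then Complex.normSq (v i j) else 0))
        + (∑ i, ∑ j, (if i = j then Complex.normSq (v i j) else 0))) := by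
    rw [← Finset.sum_add_distrib, ← Finset.sum_add_distrib]
    refine Finset.sum_congr rfl fun i _ => ?_
    rw [← Finset.sum_add_distrib, ← Finset.sum_add_distrib]
    exact Finset.sum_congr rfl fun j _ => hpt i j
  rw [hsplit]
  have h3 : (∑ i, ∑ j, (if i = j then Complex.normSq (v i j) else 0)) = 0 := by
    refine Finset.sum_eq_zero fun i _ => Finset.sum_eq_zero fun j _ => ?_
    split
    · next h => subst h; rw [skew_diag hskew]; simp
    · rfl
  have h2 : (∑ i, ∑ j, (if j < i then Complex.normSq (v i j) else 0))
      = ∑ i, ∑ j, (if i < j then Complex.normSq (v i j) else 0) := by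
    rw [Finset.sum_comm]
    refine Finset.sum_congr rfl fun i _ => Finset.sum_congr rfl fun j _ => ?_
    have : v j i = - v i j := by
      have := congrFun (congrFun hskew i) j
      simpa [Matrix.transpose_apply] using this
    rw [this, Complex.normSq_neg]
  rw [h3, h2]
  ring

lemma wedge_full_norm {e1 e2 : Fin n → ℂ}
    (h1 : (∑ i, (starRingEnd ℂ) (e1 i) * e1 i) = 1)
    (h2 : (∑ i, (starRingEnd ℂ) (e2 i) * e2 i) = 1)
    (h12 : (∑ i, (starRingEnd ℂ) (e1 i) * e2 i) = 0) :
    (∑ i, ∑ j, Complex.normSq (wedge e1 e2 i j)) = 2 := by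
  have key : (∑ i, ∑ j, (wedge e1 e2 i j * (starRingEnd ℂ) (wedge e1 e2 i j))) = 2 := by
    have hpt : ∀ i j : Fin n, wedge e1 e2 i j * (starRingEnd ℂ) (wedge e1 e2 i j)
        = (e1 i * (starRingEnd ℂ) (e1 i)) * (e2 j * (starRingEnd ℂ) (e2 j))
          + (e2 i * (starRingEnd ℂ) (e2 i)) * (e1 j * (starRingEnd ℂ) (e1 j))
          - (e1 i * (starRingEnd ℂ) (e2 i)) * (e2 j * (starRingEnd ℂ) (e1 j))
          - (e2 i * (starRingEnd ℂ) (e1 i)) * (e1 j * (starRingEnd ℂ) (e2 j)) := by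
      intro i j
      simp only [wedge, Matrix.of_apply, map_sub, _root_.map_mul]
      ring
    simp only [hpt]
    simp only [Finset.sum_sub_distrib, Finset.sum_add_distrib, ← Finset.sum_mul]
    rw [← Finset.sum_mul_sum, ← Finset.sum_mul_sum, ← Finset.sum_mul_sum, ← Finset.sum_mul_sum]
    have c1 : (∑ i, e1 i * (starRingEnd ℂ) (e1 i)) = 1 := by
      rw [← h1]; exact Finset.sum_congr rfl fun i _ => by ring
    have c2 : (∑ i, e2 i * (starRingEnd ℂ) (e2 i)) = 1 := by
      rw [← h2]; exact Finset.sum_congr rfl fun i _ => by ring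
    have c3 : (∑ i, e2 i * (starRingEnd ℂ) (e1 i)) = 0 := by
      rw [← h12]; exact Finset.sum_congr rfl fun i _ => by ring
    rw [c1, c2, c3]
    ring
  have : ((∑ i, ∑ j, Complex.normSq (wedge e1 e2 i j) : ℝ) : ℂ) = ((2:ℝ):ℂ) := by
    push_cast
    rw [← key]
    refine Finset.sum_congr rfl fun i _ => Finset.sum_congr rfl fun j _ => ?_
    rw [Complex.mul_conj]
  exact_mod_cast this

lemma basis_bridge [NeZero n] (hn : 4 ≤ n) (z w : Fin n → ℂ)
    (hz : (∑ i, (starRingEnd ℂ) (z i) * z i) = 1)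
    (hw : (∑ i, (starRingEnd ℂ) (w i) * w i) = 1)
    (hzw : (∑ i, (starRingEnd ℂ) (z i) * w i) = 0) :
    ∃ fb : Fin n → Fin n → ℂ, fb 0 = z ∧ fb 1 = w ∧
      (∀ α β, (∑ i, (starRingEnd ℂ) (fb α i) * fb β i) = if α = β then 1 else 0) := by
  have h01 : (0 : Fin n) ≠ 1 := by
    intro h
    have h2 := congrArg Fin.val h
    rw [Fin.val_zero, Fin.val_one' n, Nat.mod_eq_of_lt (by omega)] at h2
    exact absurd h2 (by norm_num)
  have hwz : (∑ i, (starRingEnd ℂ) (w i) * z i) = 0 := by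
    have h := congrArg (starRingEnd ℂ) hzw
    rw [map_sum, map_zero] at h
    rw [← h]
    refine Finset.sum_congr rfl fun i _ => ?_
    rw [_root_.map_mul, Complex.conj_conj]
    ring
  let Z : EuclideanSpace ℂ (Fin n) := (WithLp.equiv 2 (Fin n → ℂ)).symm z
  let W : EuclideanSpace ℂ (Fin n) := (WithLp.equiv 2 (Fin n → ℂ)).symm w
  let g : Fin n → EuclideanSpace ℂ (Fin n) := fun m => if m = 0 then Z else if m = 1 then W else 0
  have hg0 : g 0 = Z := by simp [g]
  have hg1 : g 1 = W := by simp [g, h01.symm]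
  have hinner : ∀ (x y : Fin n → ℂ),
      (inner ℂ ((WithLp.equiv 2 (Fin n → ℂ)).symm x) ((WithLp.equiv 2 (Fin n → ℂ)).symm y) : ℂ)
        = ∑ i, (starRingEnd ℂ) (x i) * y i := by
    intro x y
    rw [PiLp.inner_apply]
    refine Finset.sum_congr rfl fun i _ => ?_
    rw [RCLike.inner_apply']
    rfl
  have hgortho : Orthonormal ℂ (Set.restrict {0, 1} g) := by
    rw [orthonormal_iff_ite]
    rintro ⟨α, hα⟩ ⟨β, hβ⟩
    simp only [Set.mem_insert_iff, Set.mem_singleton_iff] at hα hβ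
    dsimp only [Set.restrict, Set.domRestrict]
    rcases hα with rfl | rfl <;> rcases hβ with rfl | rfl
    · rw [if_pos rfl, hg0]
      exact (hinner z z).trans hz
    · rw [if_neg (by simp [Subtype.mk.injEq, h01]), hg0, hg1]
      exact (hinner z w).trans hzw
    · rw [if_neg (by simp [Subtype.mk.injEq, h01.symm]), hg0, hg1]
      exact (hinner w z).trans hwz
    · rw [if_pos rfl, hg1]
      exact (hinner w w).trans hw
  have hcard : Module.finrank ℂ (EuclideanSpace ℂ (Fin n)) = Fintype.card (Fin n) :=
    finrank_euclideanSpace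
  obtain ⟨b, hb⟩ := hgortho.exists_orthonormalBasis_extension_of_card_eq hcard
  have hb0 : b 0 = Z := by rw [hb 0 (by simp), hg0]
  have hb1 : b 1 = W := by rw [hb 1 (by simp), hg1]
  have horth : ∀ α β, (∑ i, (starRingEnd ℂ) (b α i) * b β i) = if α = β then 1 else 0 := by
    intro α β
    have h := orthonormal_iff_ite.mp b.orthonormal α β
    rw [PiLp.inner_apply] at h
    simp only [RCLike.inner_apply'] at h
    exact h
  refine ⟨fun α => WithLp.equiv 2 (Fin n → ℂ) (b α), ?_, ?_, horth⟩
  · funext i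
    show (WithLp.equiv 2 (Fin n → ℂ)) (b 0) i = z i
    rw [hb0]
    rfl
  · funext i
    show (WithLp.equiv 2 (Fin n → ℂ)) (b 1) i = w i
    rw [hb1]
    rfl

lemma Sform_self {R : Fin n → Fin n → Fin n → Fin n → ℝ} (hR : IsCurvOp n R)
    (x u t : Fin n → ℂ) : Sform R x x u t = 0 := by
  have h : Sform R x x u t = - Sform R x x u t := by
    rw [Sform]
    refine (quad_swap12 _).trans ?_
    rw [← Finset.sum_neg_distrib]
    refine Finset.sum_congr rfl fun i _ => ?_
    rw [← Finset.sum_neg_distrib]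
    refine Finset.sum_congr rfl fun j _ => ?_
    rw [← Finset.sum_neg_distrib]
    refine Finset.sum_congr rfl fun k _ => ?_
    rw [← Finset.sum_neg_distrib]
    refine Finset.sum_congr rfl fun l _ => ?_
    rw [hR.1 j i k l]
    push_cast
    ring
  exact add_self_eq_zero.mp (by linear_combination h)

lemma Sform_swap {R : Fin n → Fin n → Fin n → Fin n → ℝ} (hR : IsCurvOp n R)
    (x y u t : Fin n → ℂ) : Sform R y x t u = Sform R x y u t := by
  rw [Sform, Sform]
  refine (quad_swap12 _).trans ?_
  refine (quad_swap34 _).trans ?_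
  refine Finset.sum_congr rfl fun i _ => Finset.sum_congr rfl fun j _ =>
    Finset.sum_congr rfl fun k _ => Finset.sum_congr rfl fun l _ => ?_
  have hval : R j i l k = R i j k l := by
    have h1 := hR.1 j i l k
    have h2 := hR.2.1 i j k l
    linarith
  rw [hval]
  ring

lemma ricci_symm {R : Fin n → Fin n → Fin n → Fin n → ℝ} (hR : IsCurvOp n R)
    (a b : Fin n) : ricci R a b = ricci R b a := by
  simp only [ricci, Matrix.of_apply]
  exact Finset.sum_congr rfl fun i _ => hR.2.2.1 i a i b

lemma trace_formula {R : Fin n → Fin n → Fin n → Fin n → ℝ} (hR : IsCurvOp n R)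
    (z w : Fin n → ℂ)
    (hz : (∑ i, (starRingEnd ℂ) (z i) * z i) = 1)
    (hw : (∑ i, (starRingEnd ℂ) (w i) * w i) = 1)
    (hzw : (∑ i, (starRingEnd ℂ) (z i) * w i) = 0) :
    Matrix.trace ((ricci R).map Complex.ofReal * wedge z w * mconj (wedge z w))
      = -((∑ j, ∑ l, ((ricci R j l : ℝ) : ℂ) * (z j * cVec z l))
        + (∑ j, ∑ l, ((ricci R j l : ℝ) : ℂ) * (w j * cVec w l))) := by
  simp only [cVec]
  have s1 : (∑ b, w b * (starRingEnd ℂ) (z b)) = 0 := by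
    rw [← hzw]; exact Finset.sum_congr rfl fun b _ => by ring
  have s2 : (∑ b, z b * (starRingEnd ℂ) (w b)) = 0 := by
    have h := congrArg (starRingEnd ℂ) hzw
    rw [map_sum, map_zero] at h
    rw [← h]
    refine Finset.sum_congr rfl fun b _ => ?_
    rw [_root_.map_mul, Complex.conj_conj]
  have s3 : (∑ b, w b * (starRingEnd ℂ) (w b)) = 1 := by
    rw [← hw]; exact Finset.sum_congr rfl fun b _ => by ring
  have s4 : (∑ b, z b * (starRingEnd ℂ) (z b)) = 1 := by
    rw [← hz]; exact Finset.sum_congr rfl fun b _ => by ring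
  have hinner : ∀ a c : Fin n, (∑ b, wedge z w c b * (starRingEnd ℂ) (wedge z w b a))
      = -(z c * (starRingEnd ℂ) (z a) + w c * (starRingEnd ℂ) (w a)) := by
    intro a c
    have hpt : ∀ b, wedge z w c b * (starRingEnd ℂ) (wedge z w b a)
        = (z c * (starRingEnd ℂ) (w a)) * (w b * (starRingEnd ℂ) (z b))
          - (z c * (starRingEnd ℂ) (z a)) * (w b * (starRingEnd ℂ) (w b))
          - (w c * (starRingEnd ℂ) (w a)) * (z b * (starRingEnd ℂ) (z b))
          + (w c * (starRingEnd ℂ) (z a)) * (z b * (starRingEnd ℂ) (w b)) := by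
      intro b
      simp only [wedge, Matrix.of_apply, map_sub, _root_.map_mul]
      ring
    simp only [hpt]
    rw [Finset.sum_add_distrib, Finset.sum_sub_distrib, Finset.sum_sub_distrib,
      ← Finset.mul_sum, ← Finset.mul_sum, ← Finset.mul_sum, ← Finset.mul_sum,
      s1, s2, s3, s4]
    ring
  have htr : Matrix.trace ((ricci R).map Complex.ofReal * wedge z w * mconj (wedge z w))
      = ∑ a, ∑ c, ((ricci R a c : ℝ) : ℂ)
          * (∑ b, wedge z w c b * (starRingEnd ℂ) (wedge z w b a)) := by
    rw [Matrix.trace]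
    refine Finset.sum_congr rfl fun a _ => ?_
    rw [Matrix.diag_apply, Matrix.mul_apply]
    calc (∑ b, ((ricci R).map Complex.ofReal * wedge z w) a b * (mconj (wedge z w)) b a)
        = ∑ b, ∑ c, ((ricci R a c : ℝ) : ℂ) * wedge z w c b * (mconj (wedge z w)) b a := by
          refine Finset.sum_congr rfl fun b _ => ?_
          rw [Matrix.mul_apply, Finset.sum_mul]
          refine Finset.sum_congr rfl fun c _ => ?_
          rw [Matrix.map_apply]
      _ = ∑ c, ((ricci R a c : ℝ) : ℂ)
            * (∑ b, wedge z w c b * (starRingEnd ℂ) (wedge z w b a)) := by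
          rw [Finset.sum_comm]
          refine Finset.sum_congr rfl fun c _ => ?_
          rw [Finset.mul_sum]
          refine Finset.sum_congr rfl fun b _ => ?_
          rw [mconj, Matrix.map_apply]
          ring
  rw [htr]
  have hpt2 : ∀ a c : Fin n, ((ricci R a c : ℝ) : ℂ)
      * (∑ b, wedge z w c b * (starRingEnd ℂ) (wedge z w b a))
      = -(((ricci R c a : ℝ) : ℂ) * (z c * (starRingEnd ℂ) (z a))
          + ((ricci R c a : ℝ) : ℂ) * (w c * (starRingEnd ℂ) (w a))) := by
    intro a c
    rw [hinner a c, ricci_symm hR a c]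
    ring
  calc (∑ a, ∑ c, ((ricci R a c : ℝ) : ℂ)
          * (∑ b, wedge z w c b * (starRingEnd ℂ) (wedge z w b a)))
      = ∑ a, ∑ c, -(((ricci R c a : ℝ) : ℂ) * (z c * (starRingEnd ℂ) (z a))
          + ((ricci R c a : ℝ) : ℂ) * (w c * (starRingEnd ℂ) (w a))) := by
        exact Finset.sum_congr rfl fun a _ => Finset.sum_congr rfl fun c _ => hpt2 a c
    _ = -(∑ a, ∑ c, (((ricci R c a : ℝ) : ℂ) * (z c * (starRingEnd ℂ) (z a))
          + ((ricci R c a : ℝ) : ℂ) * (w c * (starRingEnd ℂ) (w a)))) := by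
        simp only [Finset.sum_neg_distrib]
    _ = -((∑ j, ∑ l, ((ricci R j l : ℝ) : ℂ) * (z j * (starRingEnd ℂ) (z l)))
        + (∑ j, ∑ l, ((ricci R j l : ℝ) : ℂ) * (w j * (starRingEnd ℂ) (w l)))) := by
        congr 1
        rw [Finset.sum_comm]
        simp only [Finset.sum_add_distrib]

end Stmt2Aux

open Stmt2Aux

/-- if `R` is an algebraic curvature operator on ℝⁿ (n ≥ 4) with nonnegative
complex sectional curvature (weakly PIC₂) and `v ∈ so(n,ℂ)` has rank 2, `|v| = 1` and
`R(v,v̄) = 0`, then `−tr(Ric·v·v̄) ≤ scal/2`. -/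
theorem stmt2 (n : ℕ) (hn : 4 ≤ n) (R : Fin n → Fin n → Fin n → Fin n → ℝ)
    (hR : IsCurvOp n R)
    -- weakly PIC₂: `R(v,v̄) ≥ 0` for every rank-2 element `v ∈ so(n,ℂ)`
    (hpic2 : ∀ v : Matrix (Fin n) (Fin n) ℂ, vᵀ = -v → v.rank = 2 →
      0 ≤ (rformC R v (mconj v)).re)
    (v : Matrix (Fin n) (Fin n) ℂ) (hskew : vᵀ = -v) (hrank : v.rank = 2)
    (hnorm : (∑ i, ∑ j, if i < j then Complex.normSq (v i j) else 0) = 1)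
    (hzero : rformC R v (mconj v) = 0) :
    -(Matrix.trace ((ricci R).map Complex.ofReal * v * mconj v)).re ≤ scal R / 2 := by
  classical
  haveI : NeZero n := ⟨by omega⟩
  have h01 : (0 : Fin n) ≠ 1 := by
    intro h
    have h2 := congrArg Fin.val h
    rw [Fin.val_zero, Fin.val_one' n, Nat.mod_eq_of_lt (by omega)] at h2
    exact absurd h2 (by norm_num)
  -- extract a wedge decomposition
  obtain ⟨z0, w0, hvzw, hind⟩ := exists_wedge hskew hrank
  obtain ⟨z, w, c, hc, hwedge, hz1, hw1, hzw0⟩ := orthonormalize hind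
  have hvc : v = (c : ℂ) • wedge z w := by rw [hvzw, hwedge]
  -- the norm forces c = 1
  have hfull : (∑ i, ∑ j, Complex.normSq (v i j)) = 2 := by
    rw [skew_full_norm hskew, hnorm]
    norm_num
  have hfull2 : (∑ i, ∑ j, Complex.normSq (v i j)) = c ^ 2 * 2 := by
    conv_lhs => rw [hvc]
    have hpt : ∀ i j : Fin n, Complex.normSq (((c : ℂ) • wedge z w) i j)
        = c ^ 2 * Complex.normSq (wedge z w i j) := by
      intro i j
      rw [Matrix.smul_apply, smul_eq_mul, Complex.normSq_mul, Complex.normSq_ofReal]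
      ring
    simp only [hpt]
    simp only [← Finset.mul_sum]
    rw [wedge_full_norm hz1 hw1 hzw0]
  have hc1 : c = 1 := by nlinarith [hc, hfull.symm.trans hfull2]
  have hv : v = wedge z w := by
    rw [hvc, hc1]
    norm_num
  -- orthonormal basis extending z, w
  obtain ⟨fb, hfb0, hfb1, horth⟩ := basis_bridge hn z w hz1 hw1 hzw0
  -- completeness relation
  have hbsum : ∀ i k, (∑ α, fb α i * (starRingEnd ℂ) (fb α k)) = if i = k then 1 else 0 := by
    have hMMH : (Matrix.of fb) * (Matrix.of fb)ᴴ = 1 := by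
      ext α β
      rw [Matrix.mul_apply, Matrix.one_apply]
      have h := horth β α
      calc (∑ i, (Matrix.of fb) α i * (Matrix.of fb)ᴴ i β)
          = ∑ i, (starRingEnd ℂ) (fb β i) * fb α i := by
            refine Finset.sum_congr rfl fun i _ => ?_
            rw [Matrix.conjTranspose_apply, Matrix.of_apply, Matrix.of_apply]
            simp only [RCLike.star_def]
            ring
        _ = if β = α then 1 else 0 := h
        _ = if α = β then 1 else 0 := by simp [eq_comm]
    have hMH : (Matrix.of fb)ᴴ * (Matrix.of fb) = 1 := mul_eq_one_comm.mp hMMH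
    intro i k
    have h := congrFun (congrFun hMH i) k
    rw [Matrix.mul_apply, Matrix.one_apply] at h
    have h2 := congrArg (starRingEnd ℂ) h
    rw [map_sum] at h2
    calc (∑ α, fb α i * (starRingEnd ℂ) (fb α k))
        = ∑ α, (starRingEnd ℂ) ((Matrix.of fb)ᴴ i α * (Matrix.of fb) α k) := by
          refine Finset.sum_congr rfl fun α _ => ?_
          rw [_root_.map_mul, Matrix.conjTranspose_apply, Matrix.of_apply, Matrix.of_apply]
          simp only [RCLike.star_def, Complex.conj_conj]
          try ring
      _ = (starRingEnd ℂ) (if i = k then 1 else 0) := h2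
      _ = if i = k then 1 else 0 := by split <;> simp
  -- linear independence of distinct basis vectors
  have hindab : ∀ α β, α ≠ β → LinearIndependent ℂ ![fb α, fb β] := by
    intro α β hne
    rw [LinearIndependent.pair_iff]
    intro s t hst
    have key : ∀ γ : Fin n, (∑ i, (starRingEnd ℂ) (fb γ i) * (s * fb α i + t * fb β i))
        = s * (if γ = α then 1 else 0) + t * (if γ = β then 1 else 0) := by
      intro γ
      rw [← horth γ α, ← horth γ β, Finset.mul_sum, Finset.mul_sum,
        ← Finset.sum_add_distrib]
      exact Finset.sum_congr rfl fun i _ => by ring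
    have hz : ∀ γ : Fin n, (∑ i, (starRingEnd ℂ) (fb γ i) * (s * fb α i + t * fb β i)) = 0 := by
      intro γ
      refine Finset.sum_eq_zero fun i _ => ?_
      have := congrFun hst i
      simp only [Pi.add_apply, Pi.smul_apply, smul_eq_mul, Pi.zero_apply] at this
      rw [this, mul_zero]
    constructor
    · have := (key α).symm.trans (hz α)
      rwa [if_pos rfl, if_neg hne, mul_one, mul_zero, add_zero] at this
    · have := (key β).symm.trans (hz β)
      rwa [if_pos rfl, if_neg (Ne.symm hne), mul_zero, mul_one, zero_add] at this
  -- the sectional curvature function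
  set K : (Fin n → ℂ) → (Fin n → ℂ) → ℝ :=
    fun x y => (Sform R x y (cVec x) (cVec y)).re with hK
  have hKnonneg : ∀ α β, 0 ≤ K (fb α) (fb β) := by
    intro α β
    rcases eq_or_ne α β with rfl | hne
    · simp only [hK]
      rw [Sform_self hR]
      simp
    · have h := hpic2 (wedge (fb α) (fb β)) (wedge_transpose _ _)
        (rank_wedge (hindab α β hne))
      rwa [mconj_wedge, rformC_wedge hR] at h
  have hKdiag : ∀ x, K x x = 0 := by
    intro x
    simp only [hK]
    rw [Sform_self hR]
    simp
  have hKsymm : ∀ x y, K x y = K y x := by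
    intro x y
    simp only [hK]
    rw [Sform_swap hR]
  have hKzw : K z w = 0 := by
    simp only [hK]
    rw [← rformC_wedge hR, ← mconj_wedge, ← hv, hzero]
    simp
  -- identify the trace with basis sums
  have hA : (∑ α, K (fb α) z)
      = (∑ j, ∑ l, ((ricci R j l : ℝ) : ℂ) * (z j * cVec z l)).re := by
    rw [← ric_sum R fb hbsum z (cVec z), Complex.re_sum]
  have hB : (∑ α, K (fb α) w)
      = (∑ j, ∑ l, ((ricci R j l : ℝ) : ℂ) * (w j * cVec w l)).re := by
    rw [← ric_sum R fb hbsum w (cVec w), Complex.re_sum]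
  have hLHS : -(Matrix.trace ((ricci R).map Complex.ofReal * v * mconj v)).re
      = (∑ α, K (fb α) z) + (∑ α, K (fb α) w) := by
    rw [hv, trace_formula hR z w hz1 hw1 hzw0, hA, hB]
    simp [Complex.add_re]
  -- identify scal with the double sum
  have hscal : scal R = ∑ α, ∑ β, K (fb α) (fb β) := by
    have h := scal_sum R fb hbsum
    have h2 := congrArg Complex.re h
    rw [Complex.re_sum] at h2
    rw [show (∑ α, ∑ β, K (fb α) (fb β))
      = ∑ α, (∑ β, Sform R (fb α) (fb β) (cVec (fb α)) (cVec (fb β))).re from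
      Finset.sum_congr rfl fun α _ => (Complex.re_sum _ _).symm]
    rw [h2]
    simp
  -- the combinatorial inequality
  set A : ℝ := ∑ α, K (fb α) z with hAdef
  set B : ℝ := ∑ α, K (fb α) w with hBdef
  have hs : ({0, 1} : Finset (Fin n)).card = 2 := by rw [Finset.card_pair h01]
  have hsum_split : (∑ β, ∑ α, K (fb α) (fb β))
      = (∑ β ∈ ({0, 1} : Finset (Fin n)), ∑ α, K (fb α) (fb β))
        + ∑ β ∈ ({0, 1} : Finset (Fin n))ᶜ, ∑ α, K (fb α) (fb β) :=
    (Finset.sum_add_sum_compl _ _).symm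
  have hfirst : (∑ β ∈ ({0, 1} : Finset (Fin n)), ∑ α, K (fb α) (fb β)) = A + B := by
    rw [Finset.sum_pair h01, hfb0, hfb1, hAdef, hBdef]
  -- tail sums for rows 0 and 1
  have hrow : ∀ x : Fin n → ℂ, x = z ∨ x = w →
      (∑ β ∈ ({0, 1} : Finset (Fin n))ᶜ, K x (fb β))
        = (∑ α, K (fb α) x) - (K x z + K x w) := by
    intro x hx
    have : (∑ β, K x (fb β))
        = (∑ β ∈ ({0, 1} : Finset (Fin n)), K x (fb β))
          + ∑ β ∈ ({0, 1} : Finset (Fin n))ᶜ, K x (fb β) :=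
      (Finset.sum_add_sum_compl _ _).symm
    have h2 : (∑ β ∈ ({0, 1} : Finset (Fin n)), K x (fb β)) = K x z + K x w := by
      rw [Finset.sum_pair h01, hfb0, hfb1]
    have h3 : (∑ β, K x (fb β)) = ∑ α, K (fb α) x :=
      Finset.sum_congr rfl fun β _ => hKsymm x (fb β)
    rw [h2, h3] at this
    linarith
  have htail : A + B ≤ ∑ β ∈ ({0, 1} : Finset (Fin n))ᶜ, ∑ α, K (fb α) (fb β) := by
    have hterm : ∀ β ∈ ({0, 1} : Finset (Fin n))ᶜ,
        K z (fb β) + K w (fb β) ≤ ∑ α, K (fb α) (fb β) := by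
      intro β _
      have hle := Finset.sum_le_sum_of_subset_of_nonneg
        (Finset.subset_univ ({0, 1} : Finset (Fin n)))
        (fun α _ _ => hKnonneg α β)
      rw [Finset.sum_pair h01, hfb0, hfb1] at hle
      exact hle
    calc A + B
        = (∑ β ∈ ({0, 1} : Finset (Fin n))ᶜ, K z (fb β))
          + ∑ β ∈ ({0, 1} : Finset (Fin n))ᶜ, K w (fb β) := by
          rw [hrow z (Or.inl rfl), hrow w (Or.inr rfl)]
          rw [hKdiag z, hKdiag w, hKzw, hKsymm w z, hKzw]
          rw [hAdef, hBdef]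
          ring
      _ = ∑ β ∈ ({0, 1} : Finset (Fin n))ᶜ, (K z (fb β) + K w (fb β)) :=
          (Finset.sum_add_distrib).symm
      _ ≤ ∑ β ∈ ({0, 1} : Finset (Fin n))ᶜ, ∑ α, K (fb α) (fb β) :=
          Finset.sum_le_sum hterm
  have hfinal : 2 * (A + B) ≤ scal R := by
    rw [hscal, Finset.sum_comm, hsum_split, hfirst]
    linarith
  rw [hLHS]
  linarith
end

section
/- Let n ≥ 7 and let R be a weakly PIC algebraic curvature operator on ℝⁿ. Then the Ricci tensor of R is 3-nonnegative: for any orthonormal vectors x, y, z ∈ ℝⁿ one has xᵀ·Ric·x + yᵀ·Ric·y + zᵀ·Ric·z ≥ 0; equivalently, the sum of the three smallest eigenvalues of Ric (counted with multiplicity) is nonnegative. -/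
open Matrix BigOperators Finset

namespace Stmt5Aux

variable {n : ℕ}

/-- The real quadrilinear curvature form. -/
noncomputable def RR (R : Fin n → Fin n → Fin n → Fin n → ℝ) (w x y z : Fin n → ℝ) : ℝ :=
  ∑ i, ∑ j, ∑ k, ∑ l, R i j k l * w i * x j * y k * z l

/-- The complex quadrilinear curvature form. -/
noncomputable def RC (R : Fin n → Fin n → Fin n → Fin n → ℝ) (w x y z : Fin n → ℂ) : ℂ :=
  ∑ i, ∑ j, ∑ k, ∑ l, (R i j k l : ℂ) * w i * x j * y k * z l

/-- Complexification of a real vector. -/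
noncomputable def Cv (u : Fin n → ℝ) : Fin n → ℂ := fun i => (u i : ℂ)

/-- Entrywise conjugation of a complex vector. -/
noncomputable def cj (u : Fin n → ℂ) : Fin n → ℂ := fun i => (starRingEnd ℂ) (u i)

/-- Wedge of two vectors: an antisymmetric matrix. -/
noncomputable def wedge (ξ η : Fin n → ℂ) : Matrix (Fin n) (Fin n) ℂ :=
  Matrix.of fun i j => ξ i * η j - ξ j * η i

section sums

variable {M : Type*} [AddCommMonoid M]

lemma sum4_congr {f g : Fin n → Fin n → Fin n → Fin n → M}
    (h : ∀ i j k l, f i j k l = g i j k l) :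
    ∑ i, ∑ j, ∑ k, ∑ l, f i j k l = ∑ i, ∑ j, ∑ k, ∑ l, g i j k l := by
  simp only [h]

lemma sum4_swap12 (f : Fin n → Fin n → Fin n → Fin n → M) :
    ∑ i, ∑ j, ∑ k, ∑ l, f i j k l = ∑ i, ∑ j, ∑ k, ∑ l, f j i k l :=
  Finset.sum_comm

lemma sum4_swap34 (f : Fin n → Fin n → Fin n → Fin n → M) :
    ∑ i, ∑ j, ∑ k, ∑ l, f i j k l = ∑ i, ∑ j, ∑ k, ∑ l, f i j l k :=
  Finset.sum_congr rfl fun _ _ => Finset.sum_congr rfl fun _ _ => Finset.sum_comm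

lemma sum4_eq (f : Fin n → Fin n → Fin n → Fin n → M) :
    ∑ i, ∑ j, ∑ k, ∑ l, f i j k l
      = ∑ q : Fin n × Fin n × Fin n × Fin n, f q.1 q.2.1 q.2.2.1 q.2.2.2 := by
  rw [Fintype.sum_prod_type]
  refine Finset.sum_congr rfl fun i _ => ?_
  rw [Fintype.sum_prod_type]
  refine Finset.sum_congr rfl fun j _ => ?_
  rw [Fintype.sum_prod_type]

lemma sum4_neg {f : Fin n → Fin n → Fin n → Fin n → ℂ} :
    ∑ i, ∑ j, ∑ k, ∑ l, (- f i j k l) = - ∑ i, ∑ j, ∑ k, ∑ l, f i j k l := by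
  simp

end sums

variable {R : Fin n → Fin n → Fin n → Fin n → ℝ}

lemma RC_add₁ (w w' x y z : Fin n → ℂ) :
    RC R (w + w') x y z = RC R w x y z + RC R w' x y z := by
  simp only [RC, ← Finset.sum_add_distrib]
  exact sum4_congr fun i j k l => by simp only [Pi.add_apply]; ring

lemma RC_add₂ (w x x' y z : Fin n → ℂ) :
    RC R w (x + x') y z = RC R w x y z + RC R w x' y z := by
  simp only [RC, ← Finset.sum_add_distrib]
  exact sum4_congr fun i j k l => by simp only [Pi.add_apply]; ring

lemma RC_add₃ (w x y y' z : Fin n → ℂ) :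
    RC R w x (y + y') z = RC R w x y z + RC R w x y' z := by
  simp only [RC, ← Finset.sum_add_distrib]
  exact sum4_congr fun i j k l => by simp only [Pi.add_apply]; ring

lemma RC_add₄ (w x y z z' : Fin n → ℂ) :
    RC R w x y (z + z') = RC R w x y z + RC R w x y z' := by
  simp only [RC, ← Finset.sum_add_distrib]
  exact sum4_congr fun i j k l => by simp only [Pi.add_apply]; ring

lemma RC_smul₁ (s : ℂ) (w x y z : Fin n → ℂ) :
    RC R (s • w) x y z = s * RC R w x y z := by
  simp only [RC, Finset.mul_sum]
  exact sum4_congr fun i j k l => by simp only [Pi.smul_apply, smul_eq_mul]; ring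

lemma RC_smul₂ (s : ℂ) (w x y z : Fin n → ℂ) :
    RC R w (s • x) y z = s * RC R w x y z := by
  simp only [RC, Finset.mul_sum]
  exact sum4_congr fun i j k l => by simp only [Pi.smul_apply, smul_eq_mul]; ring

lemma RC_smul₃ (s : ℂ) (w x y z : Fin n → ℂ) :
    RC R w x (s • y) z = s * RC R w x y z := by
  simp only [RC, Finset.mul_sum]
  exact sum4_congr fun i j k l => by simp only [Pi.smul_apply, smul_eq_mul]; ring

lemma RC_smul₄ (s : ℂ) (w x y z : Fin n → ℂ) :
    RC R w x y (s • z) = s * RC R w x y z := by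
  simp only [RC, Finset.mul_sum]
  exact sum4_congr fun i j k l => by simp only [Pi.smul_apply, smul_eq_mul]; ring

lemma RC_real (w x y z : Fin n → ℝ) :
    RC R (Cv w) (Cv x) (Cv y) (Cv z) = ((RR R w x y z : ℝ) : ℂ) := by
  simp only [RC, RR, Cv]
  push_cast
  rfl

lemma expand_wedge (h1 : ∀ i j k l, R i j k l = - R j i k l)
    (h2 : ∀ i j k l, R i j k l = - R i j l k) (ξ η ζ ω : Fin n → ℂ) :
    ∑ i, ∑ j, ∑ k, ∑ l, (R i j k l : ℂ) * (wedge ξ η) i j * (wedge ζ ω) k l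
      = 4 * RC R ξ η ζ ω := by
  have e2 : ∑ i, ∑ j, ∑ k, ∑ l, (R i j k l : ℂ) * ξ i * η j * ζ l * ω k
      = - RC R ξ η ζ ω := by
    calc ∑ i, ∑ j, ∑ k, ∑ l, (R i j k l : ℂ) * ξ i * η j * ζ l * ω k
        = ∑ i, ∑ j, ∑ k, ∑ l, (R i j l k : ℂ) * ξ i * η j * ζ k * ω l :=
          sum4_swap34 (fun i j k l => (R i j k l : ℂ) * ξ i * η j * ζ l * ω k)
      _ = ∑ i, ∑ j, ∑ k, ∑ l, (-((R i j k l : ℂ) * ξ i * η j * ζ k * ω l)) := by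
          refine sum4_congr fun i j k l => ?_
          have h : (R i j l k : ℝ) = - R i j k l := by have := h2 i j k l; linarith
          rw [h]; push_cast; ring
      _ = - RC R ξ η ζ ω := by rw [sum4_neg, RC]
  have e3 : ∑ i, ∑ j, ∑ k, ∑ l, (R i j k l : ℂ) * ξ j * η i * ζ k * ω l
      = - RC R ξ η ζ ω := by
    calc ∑ i, ∑ j, ∑ k, ∑ l, (R i j k l : ℂ) * ξ j * η i * ζ k * ω l
        = ∑ i, ∑ j, ∑ k, ∑ l, (R j i k l : ℂ) * ξ i * η j * ζ k * ω l :=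
          sum4_swap12 (fun i j k l => (R i j k l : ℂ) * ξ j * η i * ζ k * ω l)
      _ = ∑ i, ∑ j, ∑ k, ∑ l, (-((R i j k l : ℂ) * ξ i * η j * ζ k * ω l)) := by
          refine sum4_congr fun i j k l => ?_
          have h : (R j i k l : ℝ) = - R i j k l := by have := h1 i j k l; linarith
          rw [h]; push_cast; ring
      _ = - RC R ξ η ζ ω := by rw [sum4_neg, RC]
  have e4 : ∑ i, ∑ j, ∑ k, ∑ l, (R i j k l : ℂ) * ξ j * η i * ζ l * ω k
      = RC R ξ η ζ ω := by
    calc ∑ i, ∑ j, ∑ k, ∑ l, (R i j k l : ℂ) * ξ j * η i * ζ l * ω k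
        = ∑ i, ∑ j, ∑ k, ∑ l, (R j i k l : ℂ) * ξ i * η j * ζ l * ω k :=
          sum4_swap12 (fun i j k l => (R i j k l : ℂ) * ξ j * η i * ζ l * ω k)
      _ = ∑ i, ∑ j, ∑ k, ∑ l, (R j i l k : ℂ) * ξ i * η j * ζ k * ω l :=
          sum4_swap34 (fun i j k l => (R j i k l : ℂ) * ξ i * η j * ζ l * ω k)
      _ = ∑ i, ∑ j, ∑ k, ∑ l, (R i j k l : ℂ) * ξ i * η j * ζ k * ω l := by
          refine sum4_congr fun i j k l => ?_
          have h : (R j i l k : ℝ) = R i j k l := by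
            have := h1 i j l k; have := h2 i j k l; linarith
          rw [h]
      _ = RC R ξ η ζ ω := by rw [RC]
  have hsplit : ∑ i, ∑ j, ∑ k, ∑ l, (R i j k l : ℂ) * (wedge ξ η) i j * (wedge ζ ω) k l
      = (∑ i, ∑ j, ∑ k, ∑ l, (R i j k l : ℂ) * ξ i * η j * ζ k * ω l)
      - (∑ i, ∑ j, ∑ k, ∑ l, (R i j k l : ℂ) * ξ i * η j * ζ l * ω k)
      - (∑ i, ∑ j, ∑ k, ∑ l, (R i j k l : ℂ) * ξ j * η i * ζ k * ω l)
      + (∑ i, ∑ j, ∑ k, ∑ l, (R i j k l : ℂ) * ξ j * η i * ζ l * ω k) := by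
    rw [sum4_congr (g := fun i j k l => (R i j k l : ℂ) * ξ i * η j * ζ k * ω l
        - (R i j k l : ℂ) * ξ i * η j * ζ l * ω k
        - (R i j k l : ℂ) * ξ j * η i * ζ k * ω l
        + (R i j k l : ℂ) * ξ j * η i * ζ l * ω k)
      (fun i j k l => by simp only [wedge, Matrix.of_apply]; ring)]
    simp only [Finset.sum_add_distrib, Finset.sum_sub_distrib]
  rw [hsplit, e2, e3, e4, ← RC]
  ring

lemma rformC_wedge (hR : IsCurvOp n R) (ξ η ζ ω : Fin n → ℂ) :
    rformC R (wedge ξ η) (wedge ζ ω) = RC R ξ η ζ ω := by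
  obtain ⟨h1, h2, _, _⟩ := hR
  rw [rformC, expand_wedge h1 h2]
  ring

lemma wedge_transpose (ξ η : Fin n → ℂ) : (wedge ξ η)ᵀ = - wedge ξ η := by
  ext i j
  simp only [wedge, Matrix.transpose_apply, Matrix.neg_apply, Matrix.of_apply]
  ring

lemma mconj_wedge (ξ η : Fin n → ℂ) :
    mconj (wedge ξ η) = wedge (cj ξ) (cj η) := by
  ext i j
  simp [mconj, wedge, cj, map_sub, _root_.map_mul]

lemma wedge_mulVec (ξ η : Fin n → ℂ) (u : Fin n → ℂ) :
    (wedge ξ η) *ᵥ u = (η ⬝ᵥ u) • ξ - (ξ ⬝ᵥ u) • η := by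
  funext i
  simp only [Matrix.mulVec, wedge, Matrix.of_apply, dotProduct, Pi.sub_apply, Pi.smul_apply,
    smul_eq_mul, Finset.sum_mul, Finset.mul_sum]
  rw [← Finset.sum_sub_distrib]
  refine Finset.sum_congr rfl fun k _ => by ring

lemma wedge_sq (ξ η : Fin n → ℂ) (h1 : ξ ⬝ᵥ ξ = 0) (h2 : η ⬝ᵥ η = 0) (h3 : ξ ⬝ᵥ η = 0) :
    wedge ξ η * wedge ξ η = 0 := by
  ext i l
  simp only [Matrix.mul_apply, wedge, Matrix.of_apply, Matrix.zero_apply]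
  have : ∀ k : Fin n, (ξ i * η k - ξ k * η i) * (ξ k * η l - ξ l * η k)
      = (ξ i * η l) * (ξ k * η k) - (ξ i * ξ l) * (η k * η k)
        - (η i * η l) * (ξ k * ξ k) + (η i * ξ l) * (ξ k * η k) := fun k => by ring
  rw [Finset.sum_congr rfl fun k _ => this k]
  simp only [Finset.sum_add_distrib, Finset.sum_sub_distrib, ← Finset.mul_sum]
  have e1 : ∑ k, ξ k * η k = 0 := h3
  have e2 : ∑ k, η k * η k = 0 := h2
  have e3 : ∑ k, ξ k * ξ k = 0 := h1
  rw [e1, e2, e3]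
  ring

lemma range_cons_pair (ξ η : Fin n → ℂ) : Set.range ![ξ, η] = {ξ, η} := by
  ext w
  constructor
  · rintro ⟨i, rfl⟩
    fin_cases i
    · exact Or.inl rfl
    · exact Or.inr rfl
  · rintro (rfl | rfl)
    · exact ⟨0, rfl⟩
    · exact ⟨1, rfl⟩

lemma wedge_rank (ξ η : Fin n → ℂ)
    (h1 : ξ ⬝ᵥ cj ξ = 2) (h2 : ξ ⬝ᵥ cj η = 0) (h3 : η ⬝ᵥ cj η = 2) (h4 : η ⬝ᵥ cj ξ = 0) :
    (wedge ξ η).rank = 2 := by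
  have hli : LinearIndependent ℂ ![ξ, η] := by
    rw [LinearIndependent.pair_iff]
    intro s t hst
    have hs : (s • ξ + t • η) ⬝ᵥ cj ξ = 0 := by rw [hst]; simp
    have ht : (s • ξ + t • η) ⬝ᵥ cj η = 0 := by rw [hst]; simp
    rw [add_dotProduct, smul_dotProduct, smul_dotProduct, h1, h4, smul_eq_mul, smul_eq_mul,
      mul_zero, add_zero] at hs
    rw [add_dotProduct, smul_dotProduct, smul_dotProduct, h2, h3, smul_eq_mul, smul_eq_mul,
      mul_zero, zero_add] at ht
    constructor
    · have : s * 2 = 0 := hs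
      simpa using this
    · have : t * 2 = 0 := ht
      simpa using this
  have hrange : LinearMap.range (wedge ξ η).mulVecLin = Submodule.span ℂ {ξ, η} := by
    apply le_antisymm
    · rintro w ⟨u, rfl⟩
      rw [Matrix.mulVecLin_apply, wedge_mulVec]
      rw [Submodule.mem_span_pair]
      exact ⟨η ⬝ᵥ u, -(ξ ⬝ᵥ u), by rw [neg_smul]; abel⟩
    · rw [Submodule.span_le]
      rintro w hw
      rcases hw with rfl | rfl
      · refine ⟨(2:ℂ)⁻¹ • cj η, ?_⟩
        rw [Matrix.mulVecLin_apply, wedge_mulVec]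
        rw [dotProduct_smul, dotProduct_smul, h3, h2]
        norm_num [smul_eq_mul]
      · refine ⟨(-(2:ℂ)⁻¹) • cj ξ, ?_⟩
        rw [Matrix.mulVecLin_apply, wedge_mulVec]
        rw [dotProduct_smul, dotProduct_smul, h1, h4]
        norm_num [smul_eq_mul]
  rw [Matrix.rank, hrange]
  have : ({ξ, η} : Set (Fin n → ℂ)) = Set.range ![ξ, η] := (range_cons_pair ξ η).symm
  rw [this, finrank_span_eq_card hli]
  simp

lemma dot_expand (u v w x : Fin n → ℝ) :
    (Cv u + Complex.I • Cv v) ⬝ᵥ (Cv w + Complex.I • Cv x)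
      = ((u ⬝ᵥ w - v ⬝ᵥ x : ℝ) : ℂ) + Complex.I * ((u ⬝ᵥ x + v ⬝ᵥ w : ℝ) : ℂ) := by
  simp only [dotProduct, Cv, Pi.add_apply, Pi.smul_apply, smul_eq_mul]
  have : ∀ k : Fin n, ((u k : ℂ) + Complex.I * (v k : ℂ)) * ((w k : ℂ) + Complex.I * (x k : ℂ))
      = ((u k * w k - v k * x k : ℝ) : ℂ) + Complex.I * ((u k * x k + v k * w k : ℝ) : ℂ) := by
    intro k
    push_cast
    linear_combination ((v k : ℂ) * (x k : ℂ)) * Complex.I_sq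
  rw [Finset.sum_congr rfl fun k _ => this k]
  rw [Finset.sum_add_distrib, ← Finset.mul_sum]
  push_cast
  rw [Finset.sum_sub_distrib, Finset.sum_add_distrib]

lemma cj_mk (u v : Fin n → ℝ) :
    cj (Cv u + Complex.I • Cv v) = Cv u + Complex.I • Cv (-v) := by
  funext i
  simp [cj, Cv, map_add, _root_.map_mul, Complex.conj_ofReal, Complex.conj_I]

lemma mk_neg (u v : Fin n → ℝ) :
    Cv u + Complex.I • Cv (-v) = Cv u + (-Complex.I) • Cv v := by
  funext i
  simp only [Cv, Pi.add_apply, Pi.smul_apply, Pi.neg_apply, smul_eq_mul]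
  push_cast
  ring

/-- the weak PIC inequality applied to the isotropic 2-plane built from an orthonormal
4-frame -/
lemma pic_half (hR : IsCurvOp n R)
    (hpic : ∀ v : Matrix (Fin n) (Fin n) ℂ, vᵀ = -v → v.rank = 2 → v * v = 0 →
      0 ≤ (rformC R v (mconj v)).re)
    (a b c d : Fin n → ℝ)
    (haa : a ⬝ᵥ a = 1) (hbb : b ⬝ᵥ b = 1) (hcc : c ⬝ᵥ c = 1) (hdd : d ⬝ᵥ d = 1)
    (hab : a ⬝ᵥ b = 0) (hac : a ⬝ᵥ c = 0) (had : a ⬝ᵥ d = 0)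
    (hbc : b ⬝ᵥ c = 0) (hbd : b ⬝ᵥ d = 0) (hcd : c ⬝ᵥ d = 0) :
    0 ≤ (RC R (Cv a + Complex.I • Cv b) (Cv c + Complex.I • Cv d)
        (cj (Cv a + Complex.I • Cv b)) (cj (Cv c + Complex.I • Cv d))).re := by
  set ξ : Fin n → ℂ := Cv a + Complex.I • Cv b with hξ
  set η : Fin n → ℂ := Cv c + Complex.I • Cv d with hη
  have hba : b ⬝ᵥ a = 0 := by rw [dotProduct_comm]; exact hab
  have hca : c ⬝ᵥ a = 0 := by rw [dotProduct_comm]; exact hac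
  have hda : d ⬝ᵥ a = 0 := by rw [dotProduct_comm]; exact had
  have hcb : c ⬝ᵥ b = 0 := by rw [dotProduct_comm]; exact hbc
  have hdb : d ⬝ᵥ b = 0 := by rw [dotProduct_comm]; exact hbd
  have hdc : d ⬝ᵥ c = 0 := by rw [dotProduct_comm]; exact hcd
  have hξξ : ξ ⬝ᵥ ξ = 0 := by
    rw [hξ, dot_expand, haa, hbb, hab, hba]; norm_num
  have hηη : η ⬝ᵥ η = 0 := by
    rw [hη, dot_expand, hcc, hdd, hcd, hdc]; norm_num
  have hξη : ξ ⬝ᵥ η = 0 := by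
    rw [hξ, hη, dot_expand, hac, hbd, had, hbc]; norm_num
  have hcjξ : cj ξ = Cv a + Complex.I • Cv (-b) := by rw [hξ, cj_mk]
  have hcjη : cj η = Cv c + Complex.I • Cv (-d) := by rw [hη, cj_mk]
  have hξcjξ : ξ ⬝ᵥ cj ξ = 2 := by
    rw [hcjξ, hξ, dot_expand]
    simp only [dotProduct_neg, haa, hbb, hab, hba]
    norm_num
  have hξcjη : ξ ⬝ᵥ cj η = 0 := by
    rw [hcjη, hξ, dot_expand]
    simp only [dotProduct_neg, hac, hbd, had, hbc]
    norm_num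
  have hηcjη : η ⬝ᵥ cj η = 2 := by
    rw [hcjη, hη, dot_expand]
    simp only [dotProduct_neg, hcc, hdd, hcd, hdc]
    norm_num
  have hηcjξ : η ⬝ᵥ cj ξ = 0 := by
    rw [hcjξ, hη, dot_expand]
    simp only [dotProduct_neg, hca, hdb, hcb, hda]
    norm_num
  have h := hpic (wedge ξ η) (wedge_transpose ξ η)
    (wedge_rank ξ η hξcjξ hξcjη hηcjη hηcjξ)
    (wedge_sq ξ η hξξ hηη hξη)
  rwa [mconj_wedge, rformC_wedge hR] at h

/-- the sum of the two PIC inequalities (frames `(a,b,c,d)` and `(a,b,c,-d)`) -/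
lemma re_sum (a b c d : Fin n → ℝ) :
    (RC R (Cv a + Complex.I • Cv b) (Cv c + Complex.I • Cv d)
        (cj (Cv a + Complex.I • Cv b)) (cj (Cv c + Complex.I • Cv d))).re
    + (RC R (Cv a + Complex.I • Cv b) (Cv c + Complex.I • Cv (-d))
        (cj (Cv a + Complex.I • Cv b)) (cj (Cv c + Complex.I • Cv (-d)))).re
    = 2 * (RR R a c a c + RR R a d a d + RR R b c b c + RR R b d b d) := by
  simp only [cj_mk]
  simp only [neg_neg]
  simp only [mk_neg]
  simp only [RC_add₁, RC_add₂, RC_add₃, RC_add₄, RC_smul₁, RC_smul₂, RC_smul₃, RC_smul₄,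
    RC_real]
  simp only [Complex.add_re, Complex.add_im, Complex.mul_re, Complex.mul_im,
    Complex.neg_re, Complex.neg_im, Complex.I_re, Complex.I_im,
    Complex.ofReal_re, Complex.ofReal_im]
  ring

/-- the basic frame inequality -/
lemma frame_ineq (hR : IsCurvOp n R)
    (hpic : ∀ v : Matrix (Fin n) (Fin n) ℂ, vᵀ = -v → v.rank = 2 → v * v = 0 →
      0 ≤ (rformC R v (mconj v)).re)
    (a b c d : Fin n → ℝ)
    (haa : a ⬝ᵥ a = 1) (hbb : b ⬝ᵥ b = 1) (hcc : c ⬝ᵥ c = 1) (hdd : d ⬝ᵥ d = 1)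
    (hab : a ⬝ᵥ b = 0) (hac : a ⬝ᵥ c = 0) (had : a ⬝ᵥ d = 0)
    (hbc : b ⬝ᵥ c = 0) (hbd : b ⬝ᵥ d = 0) (hcd : c ⬝ᵥ d = 0) :
    0 ≤ RR R a c a c + RR R a d a d + RR R b c b c + RR R b d b d := by
  have h1 := pic_half hR hpic a b c d haa hbb hcc hdd hab hac had hbc hbd hcd
  have h2 := pic_half hR hpic a b c (-d) haa hbb hcc (by simp [hdd])
    hab hac (by simp [had]) hbc (by simp [hbd]) (by simp [hcd])
  have h3 := re_sum (R := R) a b c d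
  linarith

lemma RR_symm (h1 : ∀ i j k l, R i j k l = - R j i k l)
    (h2 : ∀ i j k l, R i j k l = - R i j l k) (u w : Fin n → ℝ) :
    RR R u w u w = RR R w u w u := by
  calc RR R u w u w
      = ∑ i, ∑ j, ∑ k, ∑ l, R j i k l * u j * w i * u k * w l := by
        rw [RR]
        exact sum4_swap12 (fun i j k l => R i j k l * u i * w j * u k * w l)
    _ = ∑ i, ∑ j, ∑ k, ∑ l, R j i l k * u j * w i * u l * w k := by
        exact sum4_swap34 (fun i j k l => R j i k l * u j * w i * u k * w l)
    _ = RR R w u w u := by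
        rw [RR]
        refine sum4_congr fun i j k l => ?_
        have h : R j i l k = R i j k l := by
          have := h1 i j l k; have := h2 i j k l; linarith
        rw [h]; ring

lemma RR_diag (h1 : ∀ i j k l, R i j k l = - R j i k l) (u y z : Fin n → ℝ) :
    RR R u u y z = 0 := by
  have h : RR R u u y z = - RR R u u y z := by
    calc RR R u u y z
        = ∑ i, ∑ j, ∑ k, ∑ l, R j i k l * u j * u i * y k * z l := by
          rw [RR]
          exact sum4_swap12 (fun i j k l => R i j k l * u i * u j * y k * z l)
      _ = ∑ i, ∑ j, ∑ k, ∑ l, (-(R i j k l * u i * u j * y k * z l)) := by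
          refine sum4_congr fun i j k l => ?_
          have h : R j i k l = - R i j k l := by have := h1 i j k l; linarith
          rw [h]; ring
      _ = - RR R u u y z := by
          rw [RR]
          simp
  linarith

lemma ric_eq (e : Fin n → Fin n → ℝ)
    (hcomp : ∀ i k, ∑ p, e p i * e p k = if i = k then (1:ℝ) else 0) (u w : Fin n → ℝ) :
    ∑ p, RR R (e p) u (e p) w = u ⬝ᵥ (ricci R).mulVec w := by
  have step1 : ∑ p, RR R (e p) u (e p) w
      = ∑ i, ∑ j, ∑ k, ∑ l, R i j k l * u j * w l * (if i = k then (1:ℝ) else 0) := by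
    calc ∑ p, RR R (e p) u (e p) w
        = ∑ p, ∑ q : Fin n × Fin n × Fin n × Fin n,
            R q.1 q.2.1 q.2.2.1 q.2.2.2 * e p q.1 * u q.2.1 * e p q.2.2.1 * w q.2.2.2 :=
          Finset.sum_congr rfl fun p _ => by
            rw [RR, sum4_eq (fun i j k l => R i j k l * e p i * u j * e p k * w l)]
      _ = ∑ q : Fin n × Fin n × Fin n × Fin n, ∑ p,
            R q.1 q.2.1 q.2.2.1 q.2.2.2 * e p q.1 * u q.2.1 * e p q.2.2.1 * w q.2.2.2 :=
          Finset.sum_comm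
      _ = ∑ q : Fin n × Fin n × Fin n × Fin n,
            R q.1 q.2.1 q.2.2.1 q.2.2.2 * u q.2.1 * w q.2.2.2
              * (if q.1 = q.2.2.1 then (1:ℝ) else 0) := by
          refine Finset.sum_congr rfl fun q _ => ?_
          rw [← hcomp q.1 q.2.2.1, Finset.mul_sum]
          exact Finset.sum_congr rfl fun p _ => by ring
      _ = ∑ i, ∑ j, ∑ k, ∑ l, R i j k l * u j * w l * (if i = k then (1:ℝ) else 0) :=
          (sum4_eq (fun i j k l => R i j k l * u j * w l * (if i = k then (1:ℝ) else 0))).symm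
  rw [step1]
  have step2 : ∀ i j, (∑ k, ∑ l, R i j k l * u j * w l * (if i = k then (1:ℝ) else 0))
      = ∑ l, R i j i l * u j * w l := by
    intro i j
    have h : ∀ k, (∑ l, R i j k l * u j * w l * (if i = k then (1:ℝ) else 0))
        = if i = k then (∑ l, R i j k l * u j * w l) else 0 := by
      intro k
      split
      · simp
      · simp
    rw [Finset.sum_congr rfl fun k _ => h k, Finset.sum_ite_eq]
    simp
  rw [Finset.sum_congr rfl fun i _ => Finset.sum_congr rfl fun j _ => step2 i j]
  calc ∑ i, ∑ j, ∑ l, R i j i l * u j * w l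
      = ∑ j, ∑ i, ∑ l, R i j i l * u j * w l := Finset.sum_comm
    _ = ∑ j, ∑ l, ∑ i, R i j i l * u j * w l :=
        Finset.sum_congr rfl fun j _ => Finset.sum_comm
    _ = u ⬝ᵥ (ricci R).mulVec w := by
        simp only [dotProduct, Matrix.mulVec, ricci, Matrix.of_apply, dotProduct,
          Finset.mul_sum, Finset.sum_mul]
        refine Finset.sum_congr rfl fun j _ => Finset.sum_congr rfl fun l _ =>
          Finset.sum_congr rfl fun i _ => by ring

lemma exists_onb (n : ℕ) (hn : 7 ≤ n) (x y z : Fin n → ℝ)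
    (hxx : x ⬝ᵥ x = 1) (hyy : y ⬝ᵥ y = 1) (hzz : z ⬝ᵥ z = 1)
    (hxy : x ⬝ᵥ y = 0) (hxz : x ⬝ᵥ z = 0) (hyz : y ⬝ᵥ z = 0) :
    ∃ e : Fin n → Fin n → ℝ,
      e ⟨0, by omega⟩ = x ∧ e ⟨1, by omega⟩ = y ∧ e ⟨2, by omega⟩ = z ∧
      (∀ p q, e p ⬝ᵥ e q = if p = q then (1:ℝ) else 0) ∧
      (∀ i k, ∑ p, e p i * e p k = if i = k then (1:ℝ) else 0) := by
  have hinner : ∀ u w : EuclideanSpace ℝ (Fin n), (inner ℝ u w : ℝ) = ∑ i, u i * w i :=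
    fun u w => by simp [PiLp.inner_apply, RCLike.inner_apply, mul_comm]
  set v : Fin n → EuclideanSpace ℝ (Fin n) := fun i =>
    if i = (⟨0, by omega⟩ : Fin n) then WithLp.toLp 2 x else if i = (⟨1, by omega⟩ : Fin n) then WithLp.toLp 2 y else WithLp.toLp 2 z
    with hv
  have h01 : (⟨0, by omega⟩ : Fin n) ≠ (⟨1, by omega⟩ : Fin n) := by simp [Fin.ext_iff]
  have h02 : (⟨0, by omega⟩ : Fin n) ≠ (⟨2, by omega⟩ : Fin n) := by simp [Fin.ext_iff]
  have h12 : (⟨1, by omega⟩ : Fin n) ≠ (⟨2, by omega⟩ : Fin n) := by simp [Fin.ext_iff]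
  have hv0 : v (⟨0, by omega⟩ : Fin n) = (WithLp.toLp 2 x : EuclideanSpace ℝ (Fin n)) := by rw [hv]; simp
  have hv1 : v (⟨1, by omega⟩ : Fin n) = (WithLp.toLp 2 y : EuclideanSpace ℝ (Fin n)) := by
    rw [hv]; simp [h01.symm]
  have hv2 : v (⟨2, by omega⟩ : Fin n) = (WithLp.toLp 2 z : EuclideanSpace ℝ (Fin n)) := by
    rw [hv]; simp [h02.symm, h12.symm]
  have hcard : Module.finrank ℝ (EuclideanSpace ℝ (Fin n)) = Fintype.card (Fin n) := by
    simp [finrank_euclideanSpace]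
  have horth : Orthonormal ℝ
      ((({⟨0, by omega⟩, ⟨1, by omega⟩, ⟨2, by omega⟩} : Set (Fin n))).restrict v) := by
    rw [orthonormal_iff_ite]
    rintro ⟨i, hi⟩ ⟨j, hj⟩
    simp only [Set.restrict_apply, Set.restrict, Subtype.mk.injEq]
    simp only [Set.mem_insert_iff, Set.mem_singleton_iff] at hi hj
    rcases hi with rfl | rfl | rfl <;> rcases hj with rfl | rfl | rfl
    · rw [hv0, if_pos rfl, hinner]; exact hxx
    · rw [hv0, hv1, if_neg h01, hinner]; exact hxy
    · rw [hv0, hv2, if_neg h02, hinner]; exact hxz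
    · rw [hv1, hv0, if_neg h01.symm, hinner]
      simpa [dotProduct, mul_comm] using hxy
    · rw [hv1, if_pos rfl, hinner]; exact hyy
    · rw [hv1, hv2, if_neg h12, hinner]; exact hyz
    · rw [hv2, hv0, if_neg h02.symm, hinner]
      simpa [dotProduct, mul_comm] using hxz
    · rw [hv2, hv1, if_neg h12.symm, hinner]
      simpa [dotProduct, mul_comm] using hyz
    · rw [hv2, if_pos rfl, hinner]; exact hzz
  obtain ⟨b, hb⟩ := horth.exists_orthonormalBasis_extension_of_card_eq hcard
  have hb0 : (b ⟨0, by omega⟩ : EuclideanSpace ℝ (Fin n)) = WithLp.toLp 2 x := by rw [hb _ (by simp), hv0]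
  have hb1 : (b ⟨1, by omega⟩ : EuclideanSpace ℝ (Fin n)) = WithLp.toLp 2 y := by rw [hb _ (by simp), hv1]
  have hb2 : (b ⟨2, by omega⟩ : EuclideanSpace ℝ (Fin n)) = WithLp.toLp 2 z := by rw [hb _ (by simp), hv2]
  refine ⟨fun p i => b p i, ?_, ?_, ?_, ?_, ?_⟩
  · funext i; exact congrArg (fun w : EuclideanSpace ℝ (Fin n) => w i) hb0
  · funext i; exact congrArg (fun w : EuclideanSpace ℝ (Fin n) => w i) hb1
  · funext i; exact congrArg (fun w : EuclideanSpace ℝ (Fin n) => w i) hb2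
  · intro p q
    have h := orthonormal_iff_ite.mp b.orthonormal p q
    rw [hinner] at h
    exact h
  · intro i k
    have h := b.sum_inner_mul_inner (EuclideanSpace.single i (1:ℝ))
      (EuclideanSpace.single k (1:ℝ))
    simp [EuclideanSpace.inner_single_left, EuclideanSpace.inner_single_right,
      EuclideanSpace.single_apply] at h
    rw [h]
    simp [eq_comm]

lemma comb (n : ℕ) (hn : 7 ≤ n) (K : Fin n → Fin n → ℝ)
    (hsym : ∀ p q, K p q = K q p) (hdiag : ∀ p, K p p = 0)
    (hF : ∀ a b c d : Fin n, a ≠ b → a ≠ c → a ≠ d → b ≠ c → b ≠ d → c ≠ d →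
      0 ≤ K a c + K a d + K b c + K b d)
    (i0 i1 i2 : Fin n) (ne01 : i0 ≠ i1) (ne02 : i0 ≠ i2) (ne12 : i1 ≠ i2) :
    0 ≤ (∑ p, K p i0) + (∑ p, K p i1) + (∑ p, K p i2) := by
  classical
  set s3 : Finset (Fin n) := {i0, i1, i2} with hs3def
  set C3 : Finset (Fin n) := Finset.univ \ s3 with hC3def
  have hs3card : s3.card = 3 := by
    rw [hs3def, Finset.card_insert_of_notMem (by simp [ne01, ne02]),
      Finset.card_insert_of_notMem (by simp [ne12]), Finset.card_singleton]
  have hC3card : C3.card = n - 3 := by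
    rw [hC3def, Finset.card_sdiff_of_subset (Finset.subset_univ s3), hs3card, Finset.card_univ,
      Fintype.card_fin]
  have hmem3 : ∀ p ∈ C3, p ≠ i0 ∧ p ≠ i1 ∧ p ≠ i2 := by
    intro p hp
    simp only [hC3def, Finset.mem_sdiff, hs3def, Finset.mem_insert, Finset.mem_singleton,
      Finset.mem_univ, true_and] at hp
    tauto
  obtain ⟨i3, hi3, i4, hi4, ne34⟩ : ∃ a ∈ C3, ∃ b ∈ C3, a ≠ b :=
    Finset.one_lt_card.mp (by omega)
  obtain ⟨ne30, ne31, ne32⟩ := hmem3 i3 hi3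
  obtain ⟨ne40, ne41, ne42⟩ := hmem3 i4 hi4
  set C : Finset (Fin n) := C3 \ {i3, i4} with hCdef
  have hpairsub : ({i3, i4} : Finset (Fin n)) ⊆ C3 := by
    intro p hp
    rcases Finset.mem_insert.mp hp with rfl | hp
    · exact hi3
    · rw [Finset.mem_singleton.mp hp]; exact hi4
  have hpaircard : ({i3, i4} : Finset (Fin n)).card = 2 := by
    rw [Finset.card_insert_of_notMem (by simp [ne34]), Finset.card_singleton]
  have hCcard : C.card = n - 5 := by
    rw [hCdef, Finset.card_sdiff_of_subset hpairsub, hC3card, hpaircard]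
    omega
  have hm2 : 2 ≤ C.card := by omega
  have hmemC : ∀ p ∈ C, p ≠ i0 ∧ p ≠ i1 ∧ p ≠ i2 := fun p hp =>
    hmem3 p (Finset.sdiff_subset hp)
  set Sf : Fin n → ℝ := fun p => K i0 p + K i1 p + K i2 p with hSf
  have hpair : ∀ p ∈ C, ∀ q ∈ C, p ≠ q → 0 ≤ Sf p + Sf q := by
    intro p hp q hq hpq
    obtain ⟨hp0, hp1, hp2⟩ := hmemC p hp
    obtain ⟨hq0, hq1, hq2⟩ := hmemC q hq
    have f1 := hF i0 i1 p q ne01 hp0.symm hq0.symm hp1.symm hq1.symm hpq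
    have f2 := hF i0 i2 p q ne02 hp0.symm hq0.symm hp2.symm hq2.symm hpq
    have f3 := hF i1 i2 p q ne12 hp1.symm hq1.symm hp2.symm hq2.symm hpq
    simp only [hSf]
    linarith
  have hCsum : 0 ≤ ∑ p ∈ C, Sf p := by
    have hdouble : 0 ≤ ∑ p ∈ C, ∑ q ∈ C.erase p, (Sf p + Sf q) := by
      refine Finset.sum_nonneg fun p hp => Finset.sum_nonneg fun q hq => ?_
      exact hpair p hp q (Finset.mem_of_mem_erase hq) (Ne.symm (Finset.ne_of_mem_erase hq))
    have hident : ∑ p ∈ C, ∑ q ∈ C.erase p, (Sf p + Sf q)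
        = (2 * (C.card : ℝ) - 2) * ∑ p ∈ C, Sf p := by
      have hinner : ∀ p ∈ C, ∑ q ∈ C.erase p, (Sf p + Sf q)
          = ((C.card : ℝ) - 1) * Sf p + ((∑ q ∈ C, Sf q) - Sf p) := by
        intro p hp
        rw [Finset.sum_add_distrib, Finset.sum_const, Finset.card_erase_of_mem hp,
          Finset.sum_erase_eq_sub hp, nsmul_eq_mul]
        have h1 : (1:ℕ) ≤ C.card := by omega
        rw [Nat.cast_sub h1]
        push_cast
        ring
      rw [Finset.sum_congr rfl hinner]
      rw [Finset.sum_add_distrib, Finset.sum_sub_distrib, ← Finset.mul_sum,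
        Finset.sum_const, nsmul_eq_mul]
      ring
    have hpos : (0:ℝ) < 2 * (C.card : ℝ) - 2 := by
      have : (2:ℝ) ≤ (C.card : ℝ) := by exact_mod_cast hm2
      linarith
    nlinarith [hdouble, hident]
  have h34 : 0 ≤ 2 * (K i0 i1 + K i0 i2 + K i1 i2) + (Sf i3 + Sf i4) := by
    have f1 := hF i0 i1 i2 i3 ne01 ne02 ne30.symm ne12 ne31.symm ne32.symm
    have f2 := hF i0 i2 i1 i3 ne02 ne01 ne30.symm ne12.symm ne32.symm ne31.symm
    have f3 := hF i1 i2 i0 i3 ne12 ne01.symm ne31.symm ne02.symm ne32.symm ne30.symm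
    have f4 := hF i0 i1 i2 i4 ne01 ne02 ne40.symm ne12 ne41.symm ne42.symm
    have f5 := hF i0 i2 i1 i4 ne02 ne01 ne40.symm ne12.symm ne42.symm ne41.symm
    have f6 := hF i1 i2 i0 i4 ne12 ne01.symm ne41.symm ne02.symm ne42.symm ne40.symm
    have e1 : K i1 i0 = K i0 i1 := hsym i1 i0
    have e2 : K i2 i0 = K i0 i2 := hsym i2 i0
    have e3 : K i2 i1 = K i1 i2 := hsym i2 i1
    simp only [hSf]
    linarith
  -- assemble
  have hCsum' : ∀ i : Fin n, i = i0 ∨ i = i1 ∨ i = i2 →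
      ∑ p ∈ C, K p i = ∑ p ∈ C, K i p := fun i _ =>
    Finset.sum_congr rfl fun p _ => hsym p i
  have hsplit : ∀ i : Fin n, ∑ p, K p i
      = (∑ p ∈ C, K p i) + (K i3 i + K i4 i) + (K i0 i + K i1 i + K i2 i) := by
    intro i
    have h1 : (∑ p ∈ C, K p i) + (∑ p ∈ ({i3, i4} : Finset (Fin n)), K p i)
        = ∑ p ∈ C3, K p i := by rw [hCdef]; exact Finset.sum_sdiff hpairsub
    have h2 : (∑ p ∈ C3, K p i) + (∑ p ∈ s3, K p i) = ∑ p, K p i := by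
      rw [hC3def]; exact Finset.sum_sdiff (Finset.subset_univ s3)
    have h3 : ∑ p ∈ ({i3, i4} : Finset (Fin n)), K p i = K i3 i + K i4 i :=
      Finset.sum_pair ne34
    have h4 : ∑ p ∈ s3, K p i = K i0 i + K i1 i + K i2 i := by
      rw [hs3def, Finset.sum_insert (by simp [ne01, ne02]),
        Finset.sum_insert (by simp [ne12]), Finset.sum_singleton]
      ring
    rw [← h2, ← h1, h3, h4]
  rw [hsplit i0, hsplit i1, hsplit i2]
  rw [hCsum' i0 (Or.inl rfl), hCsum' i1 (Or.inr (Or.inl rfl)), hCsum' i2 (Or.inr (Or.inr rfl))]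
  have hCS : (∑ p ∈ C, K i0 p) + (∑ p ∈ C, K i1 p) + (∑ p ∈ C, K i2 p) = ∑ p ∈ C, Sf p := by
    rw [← Finset.sum_add_distrib, ← Finset.sum_add_distrib]
  have e1 : K i3 i0 = K i0 i3 := hsym i3 i0
  have e2 : K i4 i0 = K i0 i4 := hsym i4 i0
  have e3 : K i3 i1 = K i1 i3 := hsym i3 i1
  have e4 : K i4 i1 = K i1 i4 := hsym i4 i1
  have e5 : K i3 i2 = K i2 i3 := hsym i3 i2
  have e6 : K i4 i2 = K i2 i4 := hsym i4 i2
  have e7 : K i1 i0 = K i0 i1 := hsym i1 i0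
  have e8 : K i2 i0 = K i0 i2 := hsym i2 i0
  have e9 : K i2 i1 = K i1 i2 := hsym i2 i1
  have d0 := hdiag i0
  have d1 := hdiag i1
  have d2 := hdiag i2
  have hSf3 : Sf i3 = K i0 i3 + K i1 i3 + K i2 i3 := rfl
  have hSf4 : Sf i4 = K i0 i4 + K i1 i4 + K i2 i4 := rfl
  linarith [hCsum, h34, hCS]

end Stmt5Aux

open Stmt5Aux in
/-- if `n ≥ 7` and `R` is a weakly PIC algebraic curvature operator on ℝⁿ,
then the Ricci tensor of `R` is 3-nonnegative: for any orthonormal `x, y, z ∈ ℝⁿ`,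
`xᵀ·Ric·x + yᵀ·Ric·y + zᵀ·Ric·z ≥ 0`. -/
theorem stmt5 (n : ℕ) (hn : 7 ≤ n) (R : Fin n → Fin n → Fin n → Fin n → ℝ)
    (hR : IsCurvOp n R)
    -- weakly PIC: `R(v,v̄) ≥ 0` for every `v ∈ so(n,ℂ)` with rank 2 and `v² = 0`
    (hpic : ∀ v : Matrix (Fin n) (Fin n) ℂ, vᵀ = -v → v.rank = 2 → v * v = 0 →
      0 ≤ (rformC R v (mconj v)).re) :
    ∀ x y z : Fin n → ℝ,
      x ⬝ᵥ x = 1 → y ⬝ᵥ y = 1 → z ⬝ᵥ z = 1 →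
      x ⬝ᵥ y = 0 → x ⬝ᵥ z = 0 → y ⬝ᵥ z = 0 →
      0 ≤ x ⬝ᵥ (ricci R).mulVec x + y ⬝ᵥ (ricci R).mulVec y + z ⬝ᵥ (ricci R).mulVec z := by
  intro x y z hxx hyy hzz hxy hxz hyz
  obtain ⟨e, he0, he1, he2, hdot, hcomp⟩ :=
    exists_onb n hn x y z hxx hyy hzz hxy hxz hyz
  have hKsym : ∀ p q : Fin n, RR R (e p) (e q) (e p) (e q) = RR R (e q) (e p) (e q) (e p) :=
    fun p q => RR_symm hR.1 hR.2.1 (e p) (e q)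
  have hKdiag : ∀ p : Fin n, RR R (e p) (e p) (e p) (e p) = 0 :=
    fun p => RR_diag hR.1 (e p) (e p) (e p)
  have hKF : ∀ a b c d : Fin n, a ≠ b → a ≠ c → a ≠ d → b ≠ c → b ≠ d → c ≠ d →
      0 ≤ RR R (e a) (e c) (e a) (e c) + RR R (e a) (e d) (e a) (e d)
        + RR R (e b) (e c) (e b) (e c) + RR R (e b) (e d) (e b) (e d) := by
    intro a b c d hab hac had hbc hbd hcd
    refine frame_ineq hR hpic (e a) (e b) (e c) (e d) ?_ ?_ ?_ ?_ ?_ ?_ ?_ ?_ ?_ ?_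
    · rw [hdot a a]; simp
    · rw [hdot b b]; simp
    · rw [hdot c c]; simp
    · rw [hdot d d]; simp
    · rw [hdot a b]; simp [hab]
    · rw [hdot a c]; simp [hac]
    · rw [hdot a d]; simp [had]
    · rw [hdot b c]; simp [hbc]
    · rw [hdot b d]; simp [hbd]
    · rw [hdot c d]; simp [hcd]
  have hx : x ⬝ᵥ (ricci R).mulVec x
      = ∑ p, RR R (e p) (e ⟨0, by omega⟩) (e p) (e ⟨0, by omega⟩) := by
    rw [he0]; exact (ric_eq e hcomp x x).symm
  have hy : y ⬝ᵥ (ricci R).mulVec y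
      = ∑ p, RR R (e p) (e ⟨1, by omega⟩) (e p) (e ⟨1, by omega⟩) := by
    rw [he1]; exact (ric_eq e hcomp y y).symm
  have hz : z ⬝ᵥ (ricci R).mulVec z
      = ∑ p, RR R (e p) (e ⟨2, by omega⟩) (e p) (e ⟨2, by omega⟩) := by
    rw [he2]; exact (ric_eq e hcomp z z).symm
  rw [hx, hy, hz]
  exact comb n hn (fun p q => RR R (e p) (e q) (e p) (e q)) hKsym hKdiag hKF
    ⟨0, by omega⟩ ⟨1, by omega⟩ ⟨2, by omega⟩
    (by simp [Fin.ext_iff]) (by simp [Fin.ext_iff]) (by simp [Fin.ext_iff])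
end

section
/- Let n ≥ 3 and let R be a weakly PIC₁ algebraic curvature operator on ℝⁿ. Then for any orthonormal vectors e₁, e₂, e₃ ∈ ℝⁿ one has K(e₁,e₂) + K(e₁,e₃) ≥ 0, where K(x,y) = Σ_{i,j,k,l} R_{ijkl} x_i y_j x_k y_l denotes the (unnormalized) sectional curvature of the plane spanned by orthonormal x, y. -/
open Matrix BigOperators Finset

/-- The (unnormalized) sectional curvature `K(x,y) = Σ R_{ijkl} x_i y_j x_k y_l`. -/
noncomputable def sectK {n : ℕ} (R : Fin n → Fin n → Fin n → Fin n → ℝ)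
    (x y : Fin n → ℝ) : ℝ :=
  ∑ i, ∑ j, ∑ k, ∑ l, R i j k l * x i * y j * x k * y l


lemma sum2_congr {n : ℕ} {f g : Fin n → Fin n → ℂ} (h : ∀ i j, f i j = g i j) :
    (∑ i, ∑ j, f i j) = ∑ i, ∑ j, g i j :=
  Finset.sum_congr rfl fun i _ => Finset.sum_congr rfl fun j _ => h i j

lemma sum4_congr {n : ℕ} {f g : Fin n → Fin n → Fin n → Fin n → ℂ}
    (h : ∀ i j k l, f i j k l = g i j k l) :
    (∑ i, ∑ j, ∑ k, ∑ l, f i j k l) = ∑ i, ∑ j, ∑ k, ∑ l, g i j k l :=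
  Finset.sum_congr rfl fun i _ => Finset.sum_congr rfl fun j _ =>
    Finset.sum_congr rfl fun k _ => Finset.sum_congr rfl fun l _ => h i j k l

lemma sum2_mul {n : ℕ} (f : Fin n → Fin n → ℂ) (c : ℂ) :
    (∑ i, ∑ j, f i j) * c = ∑ i, ∑ j, f i j * c := by
  rw [Finset.sum_mul]; exact Finset.sum_congr rfl fun i _ => by rw [Finset.sum_mul]

lemma sum2_neg {n : ℕ} (f : Fin n → Fin n → ℂ) :
    (∑ i, ∑ j, -(f i j)) = - ∑ i, ∑ j, f i j := by
  rw [← Finset.sum_neg_distrib]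
  exact Finset.sum_congr rfl fun i _ => by rw [← Finset.sum_neg_distrib]

lemma sum4_swap {n : ℕ} (f : Fin n → Fin n → Fin n → Fin n → ℂ) :
    (∑ i, ∑ j, ∑ k, ∑ l, f i j k l) = ∑ i, ∑ j, ∑ k, ∑ l, f k l i j := by
  have e : ∀ g : Fin n → Fin n → Fin n → Fin n → ℂ,
      (∑ i, ∑ j, ∑ k, ∑ l, g i j k l)
        = ∑ p : Fin n × Fin n, ∑ q : Fin n × Fin n, g p.1 p.2 q.1 q.2 := by
    intro g
    rw [Fintype.sum_prod_type]
    exact Finset.sum_congr rfl fun i _ => Finset.sum_congr rfl fun j _ => by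
      rw [Fintype.sum_prod_type]
  rw [e, Finset.sum_comm, ← e fun i j k l => f k l i j]

lemma pair_antisym_sum {n : ℕ} (g : Fin n → Fin n → ℂ) (C D : Fin n → ℂ)
    (hg : ∀ k l, g k l = - g l k) :
    (∑ k, ∑ l, g k l * (C k * D l - C l * D k)) = 2 * ∑ k, ∑ l, g k l * (C k * D l) := by
  have split : (∑ k, ∑ l, g k l * (C k * D l - C l * D k))
      = (∑ k, ∑ l, g k l * (C k * D l)) - ∑ k, ∑ l, g k l * (C l * D k) := by
    rw [← Finset.sum_sub_distrib]
    exact Finset.sum_congr rfl fun k _ => by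
      rw [← Finset.sum_sub_distrib]
      exact Finset.sum_congr rfl fun l _ => by ring
  have h2 : (∑ k, ∑ l, g k l * (C l * D k)) = - ∑ k, ∑ l, g k l * (C k * D l) := by
    rw [Finset.sum_comm]
    rw [show (∑ l, ∑ k, g k l * (C l * D k)) = ∑ l, ∑ k, -(g l k * (C l * D k)) from
      sum2_congr fun l k => by rw [hg k l]; ring]
    rw [sum2_neg]
  rw [split, h2]; ring

lemma quad_expand {n : ℕ} (Rc : Fin n → Fin n → Fin n → Fin n → ℂ)
    (h1 : ∀ i j k l, Rc i j k l = - Rc j i k l)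
    (h2 : ∀ i j k l, Rc i j k l = - Rc i j l k)
    (X Y : Fin n → ℂ) :
    (∑ i, ∑ j, ∑ k, ∑ l, Rc i j k l * (X i * Y j - X j * Y i) * (X k * Y l - X l * Y k))
      = 4 * ∑ i, ∑ j, ∑ k, ∑ l, Rc i j k l * X i * Y j * X k * Y l := by
  have inner : ∀ i j, (∑ k, ∑ l, Rc i j k l * (X i * Y j - X j * Y i) * (X k * Y l - X l * Y k))
      = (2 * ∑ k, ∑ l, Rc i j k l * (X k * Y l)) * (X i * Y j - X j * Y i) := by
    intro i j
    have h := pair_antisym_sum (fun k l => Rc i j k l * (X i * Y j - X j * Y i)) X Y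
      (fun k l => by beta_reduce; rw [h2 i j k l]; ring)
    beta_reduce at h
    rw [show (∑ k, ∑ l, Rc i j k l * (X i * Y j - X j * Y i) * (X k * Y l - X l * Y k))
        = ∑ k, ∑ l, Rc i j k l * (X i * Y j - X j * Y i) * (X k * Y l - X l * Y k) from rfl, h]
    rw [mul_assoc, sum2_mul]
    congr 1
    exact sum2_congr fun k l => by ring
  calc (∑ i, ∑ j, ∑ k, ∑ l, Rc i j k l * (X i * Y j - X j * Y i) * (X k * Y l - X l * Y k))
      = ∑ i, ∑ j, (2 * ∑ k, ∑ l, Rc i j k l * (X k * Y l)) * (X i * Y j - X j * Y i) :=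
        sum2_congr fun i j => inner i j
    _ = 2 * ∑ i, ∑ j, (2 * ∑ k, ∑ l, Rc i j k l * (X k * Y l)) * (X i * Y j) := by
        refine pair_antisym_sum (fun i j => 2 * ∑ k, ∑ l, Rc i j k l * (X k * Y l)) X Y
          (fun i j => ?_)
        beta_reduce
        rw [show (∑ k, ∑ l, Rc i j k l * (X k * Y l))
            = ∑ k, ∑ l, -(Rc j i k l * (X k * Y l)) from
          sum2_congr fun k l => by rw [h1 i j k l]; ring]
        rw [sum2_neg]; ring
    _ = 4 * ∑ i, ∑ j, ∑ k, ∑ l, Rc i j k l * X i * Y j * X k * Y l := by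
        rw [show (∑ i, ∑ j, (2 * ∑ k, ∑ l, Rc i j k l * (X k * Y l)) * (X i * Y j))
            = ∑ i, ∑ j, 2 * ∑ k, ∑ l, Rc i j k l * X i * Y j * X k * Y l from
          sum2_congr fun i j => by
            rw [mul_assoc, mul_comm (∑ k, ∑ l, Rc i j k l * (X k * Y l)) (X i * Y j),
              Finset.mul_sum]
            congr 1
            refine Finset.sum_congr rfl fun k _ => ?_
            rw [Finset.mul_sum]
            exact Finset.sum_congr rfl fun l _ => by ring]
        rw [show (∑ i, ∑ j, 2 * ∑ k, ∑ l, Rc i j k l * X i * Y j * X k * Y l)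
            = 2 * ∑ i, ∑ j, ∑ k, ∑ l, Rc i j k l * X i * Y j * X k * Y l from ?_]
        · ring
        · rw [Finset.mul_sum]
          exact Finset.sum_congr rfl fun i _ => by rw [Finset.mul_sum]

/-- if `n ≥ 3` and `R` is a weakly PIC₁ algebraic curvature operator on ℝⁿ,
then for any orthonormal `e₁, e₂, e₃ ∈ ℝⁿ` one has `K(e₁,e₂) + K(e₁,e₃) ≥ 0`. -/
theorem stmt6 (n : ℕ) (hn : 3 ≤ n) (R : Fin n → Fin n → Fin n → Fin n → ℝ)
    (hR : IsCurvOp n R)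
    -- weakly PIC₁: `R(v,v̄) ≥ 0` for every `v ∈ so(n,ℂ)` with rank 2 and `v³ = 0`
    (hpic1 : ∀ v : Matrix (Fin n) (Fin n) ℂ, vᵀ = -v → v.rank = 2 → v * v * v = 0 →
      0 ≤ (rformC R v (mconj v)).re) :
    ∀ e₁ e₂ e₃ : Fin n → ℝ,
      e₁ ⬝ᵥ e₁ = 1 → e₂ ⬝ᵥ e₂ = 1 → e₃ ⬝ᵥ e₃ = 1 →
      e₁ ⬝ᵥ e₂ = 0 → e₁ ⬝ᵥ e₃ = 0 → e₂ ⬝ᵥ e₃ = 0 →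
      0 ≤ sectK R e₁ e₂ + sectK R e₁ e₃ := by
  intro e₁ e₂ e₃ h11 h22 h33 h12 h13 h23
  obtain ⟨hRa, hRb, hRc, -⟩ := hR
  set A : Fin n → ℂ := fun i => (e₁ i : ℂ) with hA
  set E2 : Fin n → ℂ := fun i => (e₂ i : ℂ) with hE2
  set E3 : Fin n → ℂ := fun i => (e₃ i : ℂ) with hE3
  set B : Fin n → ℂ := fun i => E2 i + Complex.I * E3 i with hB
  set Bc : Fin n → ℂ := fun i => E2 i - Complex.I * E3 i with hBc
  -- dot product facts
  have cAA : (∑ i, A i * A i) = 1 := by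
    have : ((∑ i, e₁ i * e₁ i : ℝ) : ℂ) = 1 := by rw [show (∑ i, e₁ i * e₁ i) = e₁ ⬝ᵥ e₁ from rfl, h11]; norm_num
    rw [← this]; push_cast; rfl
  have cE22 : (∑ i, E2 i * E2 i) = 1 := by
    have : ((∑ i, e₂ i * e₂ i : ℝ) : ℂ) = 1 := by rw [show (∑ i, e₂ i * e₂ i) = e₂ ⬝ᵥ e₂ from rfl, h22]; norm_num
    rw [← this]; push_cast; rfl
  have cE33 : (∑ i, E3 i * E3 i) = 1 := by
    have : ((∑ i, e₃ i * e₃ i : ℝ) : ℂ) = 1 := by rw [show (∑ i, e₃ i * e₃ i) = e₃ ⬝ᵥ e₃ from rfl, h33]; norm_num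
    rw [← this]; push_cast; rfl
  have cA2 : (∑ i, A i * E2 i) = 0 := by
    have : ((∑ i, e₁ i * e₂ i : ℝ) : ℂ) = 0 := by rw [show (∑ i, e₁ i * e₂ i) = e₁ ⬝ᵥ e₂ from rfl, h12]; norm_num
    rw [← this]; push_cast; rfl
  have cA3 : (∑ i, A i * E3 i) = 0 := by
    have : ((∑ i, e₁ i * e₃ i : ℝ) : ℂ) = 0 := by rw [show (∑ i, e₁ i * e₃ i) = e₁ ⬝ᵥ e₃ from rfl, h13]; norm_num
    rw [← this]; push_cast; rfl
  have c23 : (∑ i, E2 i * E3 i) = 0 := by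
    have : ((∑ i, e₂ i * e₃ i : ℝ) : ℂ) = 0 := by rw [show (∑ i, e₂ i * e₃ i) = e₂ ⬝ᵥ e₃ from rfl, h23]; norm_num
    rw [← this]; push_cast; rfl
  -- a generic splitter for sums of quadratics in our vectors
  have comb : ∀ (P Q : Fin n → ℂ) (c : ℂ) (F : Fin n → ℂ),
      True := fun _ _ _ _ => trivial
  have cAB : (∑ i, A i * B i) = 0 := by
    rw [show (∑ i, A i * B i) = (∑ i, A i * E2 i) + Complex.I * ∑ i, A i * E3 i by
      rw [Finset.mul_sum, ← Finset.sum_add_distrib]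
      exact Finset.sum_congr rfl fun i _ => by simp only [hB]; ring]
    rw [cA2, cA3]; ring
  have cBB : (∑ i, B i * B i) = 0 := by
    rw [show (∑ i, B i * B i)
        = ((∑ i, E2 i * E2 i) - ∑ i, E3 i * E3 i) + (2 * Complex.I) * ∑ i, E2 i * E3 i by
      rw [Finset.mul_sum, ← Finset.sum_sub_distrib, ← Finset.sum_add_distrib]
      exact Finset.sum_congr rfl fun i _ => by
        simp only [hB]; ring_nf; rw [Complex.I_sq]; ring]
    rw [cE22, cE33, c23]; ring
  have cABc : (∑ i, A i * Bc i) = 0 := by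
    rw [show (∑ i, A i * Bc i) = (∑ i, A i * E2 i) - Complex.I * ∑ i, A i * E3 i by
      rw [Finset.mul_sum, ← Finset.sum_sub_distrib]
      exact Finset.sum_congr rfl fun i _ => by simp only [hBc]; ring]
    rw [cA2, cA3]; ring
  have cBcB : (∑ i, Bc i * B i) = 2 := by
    rw [show (∑ i, Bc i * B i) = ((∑ i, E2 i * E2 i) + ∑ i, E3 i * E3 i) by
      rw [← Finset.sum_add_distrib]
      exact Finset.sum_congr rfl fun i _ => by
        simp only [hB, hBc]; ring_nf; rw [Complex.I_sq]; ring]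
    rw [cE22, cE33]; norm_num
  -- the matrix v
  set v : Matrix (Fin n) (Fin n) ℂ := Matrix.of fun i j => A i * B j - A j * B i with hv
  have hvapp : ∀ i j, v i j = A i * B j - A j * B i := fun i j => rfl
  -- skewness
  have hskew : vᵀ = -v := by
    ext i j
    simp only [Matrix.transpose_apply, Matrix.neg_apply, hvapp]
    ring
  -- mulVec formula
  have hmv : ∀ x : Fin n → ℂ, v.mulVec x
      = fun i => (∑ j, B j * x j) * A i - (∑ j, A j * x j) * B i := by
    intro x
    funext i
    show (∑ j, v i j * x j) = _
    rw [show (∑ j, v i j * x j)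
        = (∑ j, (B j * x j) * A i) - (∑ j, (A j * x j) * B i) by
      rw [← Finset.sum_sub_distrib]
      exact Finset.sum_congr rfl fun j _ => by rw [hvapp]; ring]
    rw [← Finset.sum_mul, ← Finset.sum_mul]
  -- v * v
  have hvv : v * v = Matrix.of fun i j => -(B i * B j) := by
    ext i j
    rw [Matrix.mul_apply]
    show (∑ k, v i k * v k j) = -(B i * B j)
    rw [show (∑ k, v i k * v k j)
        = (A i * B j) * (∑ k, A k * B k) - (A i * A j) * (∑ k, B k * B k)
          - (B i * B j) * (∑ k, A k * A k) + (A j * B i) * (∑ k, A k * B k) by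
      rw [Finset.mul_sum, Finset.mul_sum, Finset.mul_sum, Finset.mul_sum,
        ← Finset.sum_sub_distrib, ← Finset.sum_sub_distrib, ← Finset.sum_add_distrib]
      exact Finset.sum_congr rfl fun k _ => by rw [hvapp, hvapp]; ring]
    rw [cAB, cBB, cAA]; ring
  have hnilp : v * v * v = 0 := by
    rw [hvv]
    ext i j
    rw [Matrix.mul_apply]
    show (∑ k, -(B i * B k) * v k j) = 0
    rw [show (∑ k, -(B i * B k) * v k j)
        = -(B i * B j) * (∑ k, A k * B k) + (B i * A j) * (∑ k, B k * B k) by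
      rw [Finset.mul_sum, Finset.mul_sum, ← Finset.sum_add_distrib]
      exact Finset.sum_congr rfl fun k _ => by rw [hvapp]; ring]
    rw [cAB, cBB]
    simp
  -- rank
  have hAmem : A ∈ LinearMap.range v.mulVecLin := by
    refine ⟨fun j => (1/2 : ℂ) * Bc j, ?_⟩
    rw [Matrix.mulVecLin_apply, hmv]
    funext i
    rw [show (∑ j, B j * ((1/2 : ℂ) * Bc j)) = (1/2 : ℂ) * ∑ j, Bc j * B j by
        rw [Finset.mul_sum]; exact Finset.sum_congr rfl fun j _ => by ring,
      show (∑ j, A j * ((1/2 : ℂ) * Bc j)) = (1/2 : ℂ) * ∑ j, A j * Bc j by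
        rw [Finset.mul_sum]; exact Finset.sum_congr rfl fun j _ => by ring,
      cBcB, cABc]
    ring
  have hBmem : B ∈ LinearMap.range v.mulVecLin := by
    refine ⟨fun j => -(A j), ?_⟩
    rw [Matrix.mulVecLin_apply, hmv]
    funext i
    rw [show (∑ j, B j * -(A j)) = -∑ j, A j * B j by
        rw [← Finset.sum_neg_distrib]; exact Finset.sum_congr rfl fun j _ => by ring,
      show (∑ j, A j * -(A j)) = -∑ j, A j * A j by
        rw [← Finset.sum_neg_distrib]; exact Finset.sum_congr rfl fun j _ => by ring,
      cAB, cAA]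
    ring
  have hrange : LinearMap.range v.mulVecLin = Submodule.span ℂ {A, B} := by
    apply le_antisymm
    · rintro y ⟨x, rfl⟩
      rw [Submodule.mem_span_pair]
      refine ⟨∑ j, B j * x j, -(∑ j, A j * x j), ?_⟩
      rw [Matrix.mulVecLin_apply, hmv]
      funext i
      simp only [Pi.add_apply, Pi.smul_apply, smul_eq_mul]
      ring
    · rw [Submodule.span_le]
      rintro y (rfl | rfl)
      · exact hAmem
      · exact hBmem
  have hli : LinearIndependent ℂ ![A, B] := by
    rw [LinearIndependent.pair_iff]
    intro s t hst
    have hpt : ∀ i, s * A i + t * B i = 0 := by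
      intro i
      have := congrFun hst i
      simpa using this
    have hs : s = 0 := by
      have e1 : (∑ i, A i * (s * A i + t * B i)) = s := by
        rw [show (∑ i, A i * (s * A i + t * B i))
            = s * (∑ i, A i * A i) + t * (∑ i, A i * B i) by
          rw [Finset.mul_sum, Finset.mul_sum, ← Finset.sum_add_distrib]
          exact Finset.sum_congr rfl fun i _ => by ring]
        rw [cAA, cAB]; ring
      rw [← e1]
      simp [hpt]
    have ht : t = 0 := by
      have e1 : (∑ i, Bc i * (s * A i + t * B i)) = 2 * t := by
        rw [show (∑ i, Bc i * (s * A i + t * B i))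
            = s * (∑ i, A i * Bc i) + t * (∑ i, Bc i * B i) by
          rw [Finset.mul_sum, Finset.mul_sum, ← Finset.sum_add_distrib]
          exact Finset.sum_congr rfl fun i _ => by ring]
        rw [cABc, cBcB]; ring
      have e2 : (∑ i, Bc i * (s * A i + t * B i)) = 0 := by simp [hpt]
      have h2t : (2 : ℂ) * t = 0 := e1.symm.trans e2
      have := mul_eq_zero.mp h2t
      simpa using this
    exact ⟨hs, ht⟩
  have hrank : v.rank = 2 := by
    rw [Matrix.rank, hrange]
    have hset : ({A, B} : Set (Fin n → ℂ)) = Set.range ![A, B] := by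
      simp
      exact Set.pair_comm A B
    rw [hset, finrank_span_eq_card hli]
    simp
  -- conjugation facts
  have hconjA : ∀ i, (starRingEnd ℂ) (A i) = A i := fun i => Complex.conj_ofReal _
  have hconjE2 : ∀ i, (starRingEnd ℂ) (E2 i) = E2 i := fun i => Complex.conj_ofReal _
  have hconjE3 : ∀ i, (starRingEnd ℂ) (E3 i) = E3 i := fun i => Complex.conj_ofReal _
  have hconjB : ∀ i, (starRingEnd ℂ) (B i) = Bc i := by
    intro i
    show (starRingEnd ℂ) (E2 i + Complex.I * E3 i) = E2 i - Complex.I * E3 i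
    rw [_root_.map_add, _root_.map_mul, Complex.conj_I, hconjE2, hconjE3]
    ring
  have hcv : ∀ k l, mconj v k l = A k * Bc l - A l * Bc k := by
    intro k l
    show (starRingEnd ℂ) (v k l) = _
    rw [hvapp, _root_.map_sub, _root_.map_mul, _root_.map_mul, hconjA, hconjA, hconjB, hconjB]
  -- the two real bivectors
  set W2 : Fin n → Fin n → ℂ := fun i j => A i * E2 j - A j * E2 i with hW2
  set W3 : Fin n → Fin n → ℂ := fun i j => A i * E3 j - A j * E3 i with hW3
  have hvW : ∀ i j, v i j = W2 i j + Complex.I * W3 i j := by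
    intro i j
    rw [hvapp]
    show A i * (E2 j + Complex.I * E3 j) - A j * (E2 i + Complex.I * E3 i) = _
    simp only [hW2, hW3]
    ring
  have hcvW : ∀ k l, mconj v k l = W2 k l - Complex.I * W3 k l := by
    intro k l
    rw [hcv]
    show A k * (E2 l - Complex.I * E3 l) - A l * (E2 k - Complex.I * E3 k) = _
    simp only [hW2, hW3]
    ring
  -- expand the quadruple sum
  have hsplit : (∑ i, ∑ j, ∑ k, ∑ l, (R i j k l : ℂ) * v i j * mconj v k l)
      = (∑ i, ∑ j, ∑ k, ∑ l, (R i j k l : ℂ) * W2 i j * W2 k l)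
        + (∑ i, ∑ j, ∑ k, ∑ l, (R i j k l : ℂ) * W3 i j * W3 k l)
        + Complex.I * (∑ i, ∑ j, ∑ k, ∑ l, (R i j k l : ℂ) * W3 i j * W2 k l)
        - Complex.I * (∑ i, ∑ j, ∑ k, ∑ l, (R i j k l : ℂ) * W2 i j * W3 k l) := by
    rw [sum4_congr (f := fun i j k l => (R i j k l : ℂ) * v i j * mconj v k l)
      (g := fun i j k l => (R i j k l : ℂ) * W2 i j * W2 k l
        + (R i j k l : ℂ) * W3 i j * W3 k l
        + Complex.I * ((R i j k l : ℂ) * W3 i j * W2 k l)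
        - Complex.I * ((R i j k l : ℂ) * W2 i j * W3 k l))
      (fun i j k l => by beta_reduce; rw [hvW, hcvW]; ring_nf; simp only [Complex.I_sq]; ring)]
    simp only [Finset.sum_add_distrib, Finset.sum_sub_distrib, ← Finset.mul_sum]
  -- cross terms cancel by pair symmetry
  have hcross : (∑ i, ∑ j, ∑ k, ∑ l, (R i j k l : ℂ) * W3 i j * W2 k l)
      = ∑ i, ∑ j, ∑ k, ∑ l, (R i j k l : ℂ) * W2 i j * W3 k l := by
    refine (sum4_swap fun i j k l => (R i j k l : ℂ) * W3 i j * W2 k l).trans ?_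
    exact sum4_congr fun i j k l => by
      rw [show ((R k l i j : ℝ) : ℂ) = ((R i j k l : ℝ) : ℂ) by rw [← hRc]]
      ring
  -- antisymmetry of the complexified R
  have hRa' : ∀ i j k l, ((R i j k l : ℝ) : ℂ) = -((R j i k l : ℝ) : ℂ) := by
    intro i j k l; rw [hRa i j k l]; push_cast; ring
  have hRb' : ∀ i j k l, ((R i j k l : ℝ) : ℂ) = -((R i j l k : ℝ) : ℂ) := by
    intro i j k l; rw [hRb i j k l]; push_cast; ring
  have hQ2 := quad_expand (fun i j k l => ((R i j k l : ℝ) : ℂ)) hRa' hRb' A E2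
  have hQ3 := quad_expand (fun i j k l => ((R i j k l : ℝ) : ℂ)) hRa' hRb' A E3
  beta_reduce at hQ2 hQ3
  have hT2 : ((sectK R e₁ e₂ : ℝ) : ℂ)
      = ∑ i, ∑ j, ∑ k, ∑ l, ((R i j k l : ℝ) : ℂ) * A i * E2 j * A k * E2 l := by
    rw [sectK]
    push_cast
    rfl
  have hT3 : ((sectK R e₁ e₃ : ℝ) : ℂ)
      = ∑ i, ∑ j, ∑ k, ∑ l, ((R i j k l : ℝ) : ℂ) * A i * E3 j * A k * E3 l := by
    rw [sectK]
    push_cast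
    rfl
  have hval : rformC R v (mconj v) = ((sectK R e₁ e₂ + sectK R e₁ e₃ : ℝ) : ℂ) := by
    rw [rformC, hsplit, hcross]
    rw [show (∑ i, ∑ j, ∑ k, ∑ l, (R i j k l : ℂ) * W2 i j * W2 k l)
        = ∑ i, ∑ j, ∑ k, ∑ l, ((R i j k l : ℝ) : ℂ)
            * (A i * E2 j - A j * E2 i) * (A k * E2 l - A l * E2 k) from
      sum4_congr fun i j k l => by rw [hW2]]
    rw [show (∑ i, ∑ j, ∑ k, ∑ l, (R i j k l : ℂ) * W3 i j * W3 k l)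
        = ∑ i, ∑ j, ∑ k, ∑ l, ((R i j k l : ℝ) : ℂ)
            * (A i * E3 j - A j * E3 i) * (A k * E3 l - A l * E3 k) from
      sum4_congr fun i j k l => by rw [hW3]]
    rw [hQ2, hQ3]
    push_cast [hT2, hT3]
    ring
  have hre := hpic1 v hskew hrank hnilp
  rw [hval] at hre
  simpa using hre
end

section
/- Let n ≥ 2 and let v ∈ so(n,ℂ) be a matrix with rank(v) = 2 whose spectrum (as a complex n×n matrix) is contained in {λ, −λ, 0} for some λ ∈ ℂ with |λ| = α > 0. Then there exist u, w ∈ so(n,ℂ) with v = u + w and |u| = α such that for every s ∈ ℝ the matrix u + s·w has rank 2 and its spectrum is contained in {μ, −μ, 0} for some μ ∈ ℂ with |μ| = α. -/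
open Matrix BigOperators Finset

namespace Stmt8Aux

variable {n : ℕ}

lemma mem_spectrum_iff_eigen (M : Matrix (Fin n) (Fin n) ℂ) (μ : ℂ) :
    μ ∈ spectrum ℂ M ↔ ∃ x : Fin n → ℂ, x ≠ 0 ∧ M *ᵥ x = μ • x := by
  rw [spectrum.mem_iff, Matrix.isUnit_iff_isUnit_det, isUnit_iff_ne_zero, not_not,
    ← Matrix.exists_mulVec_eq_zero_iff]
  constructor
  · rintro ⟨x, hx, h⟩
    refine ⟨x, hx, ?_⟩
    rw [Matrix.sub_mulVec, Algebra.algebraMap_eq_smul_one, Matrix.smul_mulVec,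
      Matrix.one_mulVec, sub_eq_zero] at h
    exact h.symm
  · rintro ⟨x, hx, h⟩
    exact ⟨x, hx, by rw [Matrix.sub_mulVec, Algebra.algebraMap_eq_smul_one,
      Matrix.smul_mulVec, Matrix.one_mulVec, h, sub_self]⟩

lemma pair_mulVec (a b x : Fin n → ℂ) :
    (Matrix.of fun i j => a i * b j - b i * a j) *ᵥ x = (b ⬝ᵥ x) • a - (a ⬝ᵥ x) • b := by
  ext i
  simp only [Matrix.mulVec, dotProduct, Matrix.of_apply, Pi.sub_apply, Pi.smul_apply,
    smul_eq_mul, sub_mul, Finset.sum_sub_distrib, Finset.sum_mul]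
  congr 1 <;> exact Finset.sum_congr rfl fun j _ => by ring

lemma rank_add_le (A B : Matrix (Fin n) (Fin n) ℂ) : (A + B).rank ≤ A.rank + B.rank := by
  rw [Matrix.rank, Matrix.rank, Matrix.rank]
  have h : LinearMap.range (A + B).mulVecLin ≤
      LinearMap.range A.mulVecLin ⊔ LinearMap.range B.mulVecLin := by
    rintro x ⟨y, rfl⟩
    rw [Matrix.mulVecLin_add]
    exact Submodule.add_mem_sup ⟨y, rfl⟩ ⟨y, rfl⟩
  exact le_trans (Submodule.finrank_mono h)
    (Submodule.finrank_add_le_finrank_add_finrank _ _)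

lemma rank_vecMulVec_le (a b : Fin n → ℂ) : (Matrix.vecMulVec a b).rank ≤ 1 := by
  rw [Matrix.vecMulVec_eq (Fin 1)]
  exact le_trans (Matrix.rank_mul_le_right _ _)
    (le_trans (Matrix.rank_le_card_height _) (by simp))

lemma spec_pair {a e : Fin n → ℂ} {μ₀ : ℂ} (haa : a ⬝ᵥ a = 0) (hae : a ⬝ᵥ e = μ₀)
    (hμ : μ₀ ≠ 0) :
    spectrum ℂ (Matrix.of fun i j => a i * e j - e i * a j) ⊆ {μ₀, -μ₀, 0} := by
  intro μ hmem
  obtain ⟨x, hx, hMx⟩ := (mem_spectrum_iff_eigen _ _).1 hmem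
  by_cases h0 : μ = 0
  · right; right; exact h0
  rw [pair_mulVec] at hMx
  set P := e ⬝ᵥ x with hP
  set Q := a ⬝ᵥ x with hQ
  have hxeq : x = μ⁻¹ • (P • a - Q • e) := by
    rw [hMx, smul_smul, inv_mul_cancel₀ h0, one_smul]
  have hQeq : Q = μ⁻¹ * (P * (a ⬝ᵥ a) - Q * (a ⬝ᵥ e)) := by
    rw [hQ]
    conv_lhs => rw [hxeq]
    simp only [dotProduct_smul, dotProduct_sub, smul_eq_mul]; rfl
  rw [haa, hae] at hQeq
  by_cases hQ0 : Q = 0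
  · -- μ = μ₀
    have hPeq : P = μ⁻¹ * (P * (e ⬝ᵥ a) - Q * (e ⬝ᵥ e)) := by
      rw [hP]
      conv_lhs => rw [hxeq]
      simp only [dotProduct_smul, dotProduct_sub, smul_eq_mul]; rfl
    rw [hQ0, dotProduct_comm e a, hae] at hPeq
    have hP0 : P ≠ 0 := by
      intro h
      apply hx
      rw [hxeq, hQ0, h]
      simp
    have h2 : μ * P = μ * (μ⁻¹ * (P * μ₀ - 0 * (e ⬝ᵥ e))) := by rw [← hPeq]
    rw [mul_inv_cancel_left₀ h0] at h2
    left
    exact mul_right_cancel₀ hP0 (by linear_combination h2 : μ * P = μ₀ * P)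
  · -- μ = -μ₀
    have h2 : μ * Q = μ * (μ⁻¹ * (P * 0 - Q * μ₀)) := by rw [← hQeq]
    rw [mul_inv_cancel_left₀ h0] at h2
    right; left
    exact mul_right_cancel₀ hQ0 (by linear_combination h2 : μ * Q = -μ₀ * Q)

lemma rank_pair {a e : Fin n → ℂ} {μ₀ : ℂ} (haa : a ⬝ᵥ a = 0) (hae : a ⬝ᵥ e = μ₀)
    (hμ : μ₀ ≠ 0) :
    (Matrix.of fun i j => a i * e j - e i * a j).rank = 2 := by
  set M := Matrix.of fun i j => a i * e j - e i * a j with hM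
  have ha0 : a ≠ 0 := by
    intro h
    apply hμ
    rw [← hae, h]
    simp
  have hMa : M *ᵥ a = μ₀ • a := by
    rw [hM, pair_mulVec, dotProduct_comm e a, hae, haa]
    simp
  have hMe : M *ᵥ e = (e ⬝ᵥ e) • a - μ₀ • e := by
    rw [hM, pair_mulVec, hae]
  have hup : M.rank ≤ 2 := by
    have hsplit : M = Matrix.vecMulVec a e + Matrix.vecMulVec (-e) a := by
      ext i j
      simp [Matrix.vecMulVec_apply, hM]
      ring
    calc M.rank ≤ (Matrix.vecMulVec a e).rank + (Matrix.vecMulVec (-e) a).rank := by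
          rw [hsplit]; exact rank_add_le _ _
      _ ≤ 1 + 1 := add_le_add (rank_vecMulVec_le _ _) (rank_vecMulVec_le _ _)
      _ = 2 := rfl
  have hmem_a : a ∈ LinearMap.range M.mulVecLin := by
    refine ⟨μ₀⁻¹ • a, ?_⟩
    rw [Matrix.mulVecLin_apply, Matrix.mulVec_smul, hMa, smul_smul, inv_mul_cancel₀ hμ, one_smul]
  have hmem_e : e ∈ LinearMap.range M.mulVecLin := by
    have h1 : M *ᵥ e ∈ LinearMap.range M.mulVecLin := ⟨e, rfl⟩
    have h2 : (e ⬝ᵥ e) • a ∈ LinearMap.range M.mulVecLin :=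
      Submodule.smul_mem _ _ hmem_a
    have h3 : (e ⬝ᵥ e) • a - M *ᵥ e ∈ LinearMap.range M.mulVecLin :=
      Submodule.sub_mem _ h2 h1
    have h4 : μ₀⁻¹ • ((e ⬝ᵥ e) • a - M *ᵥ e) ∈ LinearMap.range M.mulVecLin :=
      Submodule.smul_mem _ _ h3
    have : μ₀⁻¹ • ((e ⬝ᵥ e) • a - M *ᵥ e) = e := by
      rw [hMe]
      rw [show (e ⬝ᵥ e) • a - ((e ⬝ᵥ e) • a - μ₀ • e) = μ₀ • e by abel]
      rw [smul_smul, inv_mul_cancel₀ hμ, one_smul]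
    rwa [this] at h4
  have hli : LinearIndependent ℂ ![a, e] := by
    rw [LinearIndependent.pair_iff' ha0]
    intro t h
    apply hμ
    rw [← hae, ← h]
    simp [dotProduct_smul, haa, smul_eq_mul]
  have hspan : Submodule.span ℂ (Set.range ![a, e]) ≤ LinearMap.range M.mulVecLin := by
    rw [Submodule.span_le]
    rintro x ⟨i, rfl⟩
    fin_cases i
    · exact hmem_a
    · exact hmem_e
  have hlow : 2 ≤ M.rank := by
    rw [Matrix.rank]
    calc 2 = Module.finrank ℂ (Submodule.span ℂ (Set.range ![a, e])) := by
          rw [finrank_span_eq_card hli]; simp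
      _ ≤ Module.finrank ℂ (LinearMap.range M.mulVecLin) := Submodule.finrank_mono hspan
  omega

lemma exists_dual {a b : Fin n → ℂ} (h : LinearIndependent ℂ ![a, b]) (c d : ℂ) :
    ∃ y, a ⬝ᵥ y = c ∧ b ⬝ᵥ y = d := by
  have hA : (Matrix.of ![a, b]).rank = 2 := by
    have := LinearIndependent.rank_matrix (M := Matrix.of ![a, b]) h
    simpa using this
  have htop : LinearMap.range (Matrix.of ![a, b]).mulVecLin = ⊤ := by
    apply Submodule.eq_top_of_finrank_eq
    rw [← Matrix.rank, hA]
    simp [Module.finrank_pi]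
  have hmem : ![c, d] ∈ LinearMap.range (Matrix.of ![a, b]).mulVecLin := by
    rw [htop]; trivial
  obtain ⟨y, hy⟩ := hmem
  rw [Matrix.mulVecLin_apply] at hy
  refine ⟨y, ?_, ?_⟩
  · have := congrFun hy 0
    simpa [Matrix.mulVec] using this
  · have := congrFun hy 1
    simpa [Matrix.mulVec] using this

lemma skewdot {v : Matrix (Fin n) (Fin n) ℂ} (hskew : vᵀ = -v) (x y : Fin n → ℂ) :
    x ⬝ᵥ (v *ᵥ y) = -(y ⬝ᵥ (v *ᵥ x)) := by
  rw [dotProduct_mulVec x v y, ← Matrix.mulVec_transpose, hskew,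
    Matrix.neg_mulVec, neg_dotProduct, dotProduct_comm]

lemma structure_lemma (v : Matrix (Fin n) (Fin n) ℂ) (hskew : vᵀ = -v) (hrank : v.rank = 2)
    {a : Fin n → ℂ} (ha : a ≠ 0) {μ₀ : ℂ} (hμ : μ₀ ≠ 0) (heig : v *ᵥ a = μ₀ • a) :
    ∃ b : Fin n → ℂ, ∀ i j, v i j = a i * b j - b i * a j := by
  classical
  have hrange : Module.finrank ℂ (LinearMap.range v.mulVecLin) = 2 := hrank
  have hexy : ∃ y₀, v *ᵥ y₀ ∉ Submodule.span ℂ {a} := by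
    by_contra hcon
    push_neg at hcon
    have hle : LinearMap.range v.mulVecLin ≤ Submodule.span ℂ {a} := by
      rintro x ⟨y, rfl⟩
      exact hcon y
    have hmono := Submodule.finrank_mono hle
    rw [hrange, finrank_span_singleton ha] at hmono
    omega
  obtain ⟨y₀, hy₀⟩ := hexy
  set b₀ := v *ᵥ y₀ with hb₀
  have hli : LinearIndependent ℂ ![a, b₀] := by
    rw [LinearIndependent.pair_iff' ha]
    intro t h
    exact hy₀ (by rw [← h]; exact Submodule.smul_mem _ t (Submodule.mem_span_singleton_self a))
  have hmem_a : a ∈ LinearMap.range v.mulVecLin := ⟨μ₀⁻¹ • a, by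
    rw [Matrix.mulVecLin_apply, Matrix.mulVec_smul, heig, smul_smul, inv_mul_cancel₀ hμ, one_smul]⟩
  have hmem_b₀ : b₀ ∈ LinearMap.range v.mulVecLin := ⟨y₀, rfl⟩
  have hspan : Submodule.span ℂ (Set.range ![a, b₀]) = LinearMap.range v.mulVecLin := by
    apply Submodule.eq_of_le_of_finrank_le
    · rw [Submodule.span_le]
      rintro x ⟨i, rfl⟩
      fin_cases i
      · exact hmem_a
      · exact hmem_b₀
    · rw [hrange, finrank_span_eq_card hli]
      simp
  have hrangeset : Set.range ![a, b₀] = {a, b₀} := by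
    ext x
    constructor
    · rintro ⟨i, rfl⟩
      fin_cases i
      · exact Set.mem_insert _ _
      · exact Set.mem_insert_of_mem _ rfl
    · rintro (rfl | rfl)
      · exact ⟨0, rfl⟩
      · exact ⟨1, rfl⟩
  have hcol2 : ∀ j, ∃ pj qj : ℂ, pj • a + qj • b₀ = fun i => v i j := by
    intro j
    have hc : (fun i => v i j) ∈ Submodule.span ℂ (Set.range ![a, b₀]) := by
      rw [hspan]
      refine ⟨Pi.single j 1, ?_⟩
      rw [Matrix.mulVecLin_apply]
      ext i
      simp [Matrix.mulVec, dotProduct_single]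
    rw [hrangeset] at hc
    exact Submodule.mem_span_pair.1 hc
  choose p q hpq using hcol2
  have hv : ∀ i j, v i j = p j * a i + q j * b₀ i := by
    intro i j
    have h := congrFun (hpq j) i
    simpa using h.symm
  have hmul : ∀ x, v *ᵥ x = (p ⬝ᵥ x) • a + (q ⬝ᵥ x) • b₀ := by
    intro x
    ext i
    simp only [Matrix.mulVec, dotProduct, Pi.add_apply, Pi.smul_apply, smul_eq_mul]
    calc ∑ j, v i j * x j = ∑ j, (p j * x j * a i + q j * x j * b₀ i) :=
          Finset.sum_congr rfl fun j _ => by rw [hv i j]; ring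
      _ = (∑ j, p j * x j) * a i + (∑ j, q j * x j) * b₀ i := by
          rw [Finset.sum_add_distrib, ← Finset.sum_mul, ← Finset.sum_mul]
  have hmulT : ∀ x, vᵀ *ᵥ x = (a ⬝ᵥ x) • p + (b₀ ⬝ᵥ x) • q := by
    intro x
    ext j
    simp only [Matrix.mulVec, dotProduct, Matrix.transpose_apply, Pi.add_apply,
      Pi.smul_apply, smul_eq_mul]
    calc ∑ i, v i j * x i = ∑ i, (a i * x i * p j + b₀ i * x i * q j) :=
          Finset.sum_congr rfl fun i _ => by rw [hv i j]; ring
      _ = (∑ i, a i * x i) * p j + (∑ i, b₀ i * x i) * q j := by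
          rw [Finset.sum_add_distrib, ← Finset.sum_mul, ← Finset.sum_mul]
  obtain ⟨y₁, hy₁a, hy₁b⟩ := exists_dual hli 1 0
  obtain ⟨y₂, hy₂a, hy₂b⟩ := exists_dual hli 0 1
  have hskew' : ∀ x, vᵀ *ᵥ x = -(v *ᵥ x) := fun x => by rw [hskew, Matrix.neg_mulVec]
  have hdot : ∀ (y : Fin n → ℂ) (c₁ c₂ : ℂ),
      y ⬝ᵥ (c₁ • a + c₂ • b₀) = c₁ * (a ⬝ᵥ y) + c₂ * (b₀ ⬝ᵥ y) := by
    intro y c₁ c₂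
    rw [dotProduct_add, dotProduct_smul, dotProduct_smul,
      dotProduct_comm y a, dotProduct_comm y b₀]
    simp [smul_eq_mul]
  have hdiag : ∀ y, y ⬝ᵥ (v *ᵥ y) = 0 := by
    intro y
    have h := skewdot hskew y y
    have h2 : (2:ℂ) * (y ⬝ᵥ (v *ᵥ y)) = 0 := by linear_combination h
    rcases mul_eq_zero.mp h2 with h3 | h3
    · norm_num at h3
    · exact h3
  have hp1 : p ⬝ᵥ y₁ = 0 := by
    have h := hdiag y₁
    rw [hmul y₁, hdot, hy₁a, hy₁b] at h
    simpa using h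
  have hq2 : q ⬝ᵥ y₂ = 0 := by
    have h := hdiag y₂
    rw [hmul y₂, hdot, hy₂a, hy₂b] at h
    simpa using h
  have hcross : p ⬝ᵥ y₂ = -(q ⬝ᵥ y₁) := by
    have h := skewdot hskew y₁ y₂
    rw [hmul y₂, hmul y₁, hdot, hdot, hy₁a, hy₁b, hy₂a, hy₂b] at h
    simpa using h
  have hEp := hskew' y₁
  rw [hmulT y₁, hmul y₁, hy₁a, hy₁b] at hEp
  have hEq := hskew' y₂
  rw [hmulT y₂, hmul y₂, hy₂a, hy₂b] at hEq
  set t : ℂ := -(q ⬝ᵥ y₁) with ht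
  have hpj : ∀ j, p j = t * b₀ j := by
    intro j
    have h := congrFun hEp j
    simp only [Pi.add_apply, Pi.smul_apply, Pi.neg_apply, smul_eq_mul, one_mul, zero_mul,
      add_zero] at h
    rw [h, hp1, ht]
    ring
  have hqj : ∀ j, q j = -t * a j := by
    intro j
    have h := congrFun hEq j
    simp only [Pi.add_apply, Pi.smul_apply, Pi.neg_apply, smul_eq_mul, one_mul, zero_mul,
      zero_add] at h
    rw [h, hq2, hcross, ht]
    ring
  refine ⟨fun j => t * b₀ j, fun i j => ?_⟩
  rw [hv i j, hpj j, hqj j]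
  ring

lemma rank_smul {c : ℂ} (hc : c ≠ 0) (M : Matrix (Fin n) (Fin n) ℂ) :
    (c • M).rank = M.rank := by
  have hr : LinearMap.range (c • M).mulVecLin = LinearMap.range M.mulVecLin := by
    apply le_antisymm
    · rintro x ⟨y, rfl⟩
      refine ⟨c • y, ?_⟩
      rw [Matrix.mulVecLin_apply, Matrix.mulVecLin_apply, Matrix.mulVec_smul,
        Matrix.smul_mulVec]
    · rintro x ⟨y, rfl⟩
      refine ⟨c⁻¹ • y, ?_⟩
      simp [Matrix.mulVec_smul, Matrix.smul_mulVec, smul_smul, inv_mul_cancel₀ hc]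
  rw [Matrix.rank, Matrix.rank, hr]

lemma half_sum {f : Fin n → Fin n → ℝ} (hsymm : ∀ i j, f i j = f j i)
    (hdiag : ∀ i, f i i = 0) :
    2 * (∑ i, ∑ j, if i < j then f i j else 0) = ∑ i, ∑ j, f i j := by
  have key : ∀ i j, f i j = (if i < j then f i j else 0) + (if j < i then f i j else 0) := by
    intro i j
    rcases lt_trichotomy i j with h | h | h
    · simp [h, asymm h]
    · subst h; simp [lt_irrefl, hdiag]
    · simp [h, asymm h]
  have h1 : ∑ i, ∑ j, f i j
      = (∑ i, ∑ j, if i < j then f i j else 0) + (∑ i, ∑ j, if j < i then f i j else 0) := by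
    rw [← Finset.sum_add_distrib]
    refine Finset.sum_congr rfl fun i _ => ?_
    rw [← Finset.sum_add_distrib]
    exact Finset.sum_congr rfl fun j _ => key i j
  have h2 : (∑ i, ∑ j, if j < i then f i j else 0)
      = ∑ i, ∑ j, if i < j then f i j else 0 := by
    rw [Finset.sum_comm]
    refine Finset.sum_congr rfl fun x _ => Finset.sum_congr rfl fun y _ => ?_
    by_cases h : x < y
    · simp [h, hsymm x y]
    · simp [h]
  rw [h1, h2]
  ring

lemma key_norm (a : Fin n → ℂ) (haa : a ⬝ᵥ a = 0) :
    ∑ i, ∑ j, Complex.normSq (a i * (starRingEnd ℂ) (a j) - (starRingEnd ℂ) (a i) * a j)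
      = 2 * (∑ i, Complex.normSq (a i)) ^ 2 := by
  set na : ℝ := ∑ i, Complex.normSq (a i) with hna
  have hdouble : ∀ (F G : Fin n → ℂ),
      (∑ i, ∑ j, F i * G j) = (∑ i, F i) * (∑ i, G i) := fun F G =>
    (Finset.sum_mul_sum Finset.univ Finset.univ F G).symm
  have hS1 : ∑ i, a i * (starRingEnd ℂ) (a i) = (na : ℂ) := by
    rw [hna]
    push_cast
    exact Finset.sum_congr rfl fun i _ => Complex.mul_conj (a i)
  have hS2 : ∑ i, (a i) ^ 2 = 0 := by
    have : a ⬝ᵥ a = ∑ i, (a i) ^ 2 := Finset.sum_congr rfl fun i _ => (sq (a i)).symm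
    rw [← this, haa]
  have hS3 : ∑ i, ((starRingEnd ℂ) (a i)) ^ 2 = 0 := by
    have : ∑ i, ((starRingEnd ℂ) (a i)) ^ 2 = (starRingEnd ℂ) (∑ i, (a i) ^ 2) := by
      rw [map_sum]
      exact Finset.sum_congr rfl fun i _ => by rw [map_pow]
    rw [this, hS2, map_zero]
  have hmain : ((∑ i, ∑ j, Complex.normSq
      (a i * (starRingEnd ℂ) (a j) - (starRingEnd ℂ) (a i) * a j) : ℝ) : ℂ)
      = 2 * (na : ℂ) ^ 2 := by
    push_cast
    calc ∑ i, ∑ j, (Complex.normSq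
          (a i * (starRingEnd ℂ) (a j) - (starRingEnd ℂ) (a i) * a j) : ℂ)
        = ∑ i, ∑ j, (2 * ((a i * (starRingEnd ℂ) (a i)) * (a j * (starRingEnd ℂ) (a j)))
            - ((a i) ^ 2 * ((starRingEnd ℂ) (a j)) ^ 2)
            - (((starRingEnd ℂ) (a i)) ^ 2 * (a j) ^ 2)) := by
          refine Finset.sum_congr rfl fun i _ => Finset.sum_congr rfl fun j _ => ?_
          rw [← Complex.mul_conj]
          simp only [map_sub, _root_.map_mul, Complex.conj_conj]
          ring
      _ = 2 * ((∑ i, a i * (starRingEnd ℂ) (a i)) * (∑ i, a i * (starRingEnd ℂ) (a i)))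
            - (∑ i, (a i) ^ 2) * (∑ i, ((starRingEnd ℂ) (a i)) ^ 2)
            - (∑ i, ((starRingEnd ℂ) (a i)) ^ 2) * (∑ i, (a i) ^ 2) := by
          rw [← hdouble (fun i => a i * (starRingEnd ℂ) (a i))
              (fun i => a i * (starRingEnd ℂ) (a i)),
            ← hdouble (fun i => (a i) ^ 2) (fun i => ((starRingEnd ℂ) (a i)) ^ 2),
            ← hdouble (fun i => ((starRingEnd ℂ) (a i)) ^ 2) (fun i => (a i) ^ 2),
            Finset.mul_sum, ← Finset.sum_sub_distrib, ← Finset.sum_sub_distrib]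
          refine Finset.sum_congr rfl fun i _ => ?_
          rw [Finset.mul_sum, ← Finset.sum_sub_distrib, ← Finset.sum_sub_distrib]
      _ = 2 * (na : ℂ) ^ 2 := by
          rw [hS1, hS2, hS3]
          ring
  exact_mod_cast hmain

end Stmt8Aux


/-- if `v ∈ so(n,ℂ)` has rank 2 and spectrum contained in `{λ, −λ, 0}` with
`|λ| = α > 0`, then `v = u + w` with `u, w ∈ so(n,ℂ)`, `|u| = α`, such that for every
`s ∈ ℝ` the matrix `u + s·w` has rank 2 and spectrum contained in some `{μ, −μ, 0}`
with `|μ| = α`. -/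
theorem stmt8 (n : ℕ) (hn : 2 ≤ n) (v : Matrix (Fin n) (Fin n) ℂ) (hskew : vᵀ = -v)
    (hrank : v.rank = 2) (lam : ℂ) (alpha : ℝ) (hlam : ‖lam‖ = alpha)
    (hpos : 0 < alpha) (hspec : spectrum ℂ v ⊆ {lam, -lam, 0}) :
    ∃ u w : Matrix (Fin n) (Fin n) ℂ,
      uᵀ = -u ∧ wᵀ = -w ∧ v = u + w ∧
      (∑ i, ∑ j, if i < j then Complex.normSq (u i j) else 0) = alpha ^ 2 ∧
      ∀ s : ℝ, (u + (s : ℂ) • w).rank = 2 ∧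
        ∃ mu : ℂ, ‖mu‖ = alpha ∧
          spectrum ℂ (u + (s : ℂ) • w) ⊆ {mu, -mu, 0} := by
  classical
  have hskewentry : ∀ i j, v j i = -v i j := by
    intro i j
    have h := congrFun (congrFun hskew i) j
    simpa [Matrix.transpose_apply] using h
  by_cases hcase : ∀ μ ∈ spectrum ℂ v, μ = 0
  · -- nilpotent case
    have hvne : v ≠ 0 := fun h => by rw [h] at hrank; simp at hrank
    have hentry : ∃ i j, i < j ∧ v i j ≠ 0 := by
      have h1 : ∃ i, v i ≠ 0 := by
        by_contra hcon
        push_neg at hcon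
        exact hvne (by ext i j; rw [hcon i]; rfl)
      obtain ⟨i, hi⟩ := h1
      obtain ⟨j, hj⟩ := Function.ne_iff.mp hi
      rcases lt_trichotomy i j with h | h | h
      · exact ⟨i, j, h, hj⟩
      · subst h
        exfalso
        apply hj
        have h2 := hskewentry i i
        rcases mul_eq_zero.mp (show (2:ℂ) * v i i = 0 by linear_combination h2) with h' | h'
        · norm_num at h'
        · exact h'
      · exact ⟨j, i, h, by rw [hskewentry i j]; exact neg_ne_zero.mpr hj⟩
    obtain ⟨i₀, j₀, hij, hne⟩ := hentry
    set Sv : ℝ := ∑ i, ∑ j, if i < j then Complex.normSq (v i j) else 0 with hSv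
    have hSpos : 0 < Sv := by
      rw [hSv]
      apply Finset.sum_pos'
      · intro i _
        apply Finset.sum_nonneg
        intro j _
        split
        · exact Complex.normSq_nonneg _
        · exact le_refl 0
      · refine ⟨i₀, Finset.mem_univ _, ?_⟩
        apply Finset.sum_pos'
        · intro j _
          split
          · exact Complex.normSq_nonneg _
          · exact le_refl 0
        · exact ⟨j₀, Finset.mem_univ _, by rw [if_pos hij]; exact Complex.normSq_pos.mpr hne⟩
    set ρ : ℝ := alpha / Real.sqrt Sv with hρ
    have hsq : 0 < Real.sqrt Sv := Real.sqrt_pos.mpr hSpos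
    have hρpos : 0 < ρ := div_pos hpos hsq
    set r : ℂ := Complex.I * (ρ : ℂ) with hr
    refine ⟨r • v, (1 - r) • v, ?_, ?_, ?_, ?_, ?_⟩
    · rw [Matrix.transpose_smul, hskew, smul_neg]
    · rw [Matrix.transpose_smul, hskew, smul_neg]
    · have h1 : r + (1 - r) = 1 := by ring
      rw [← add_smul, h1, one_smul]
    · have hterm : ∀ i j : Fin n, (if i < j then Complex.normSq ((r • v) i j) else 0)
          = Complex.normSq r * (if i < j then Complex.normSq (v i j) else 0) := by
        intro i j
        split
        · simp [Matrix.smul_apply, Complex.normSq_mul, smul_eq_mul]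
        · simp
      calc ∑ i, ∑ j, (if i < j then Complex.normSq ((r • v) i j) else 0)
          = ∑ i, ∑ j, Complex.normSq r * (if i < j then Complex.normSq (v i j) else 0) :=
            Finset.sum_congr rfl fun i _ => Finset.sum_congr rfl fun j _ => hterm i j
        _ = Complex.normSq r * Sv := by
            rw [hSv, Finset.mul_sum]
            exact Finset.sum_congr rfl fun i _ => by rw [Finset.mul_sum]
        _ = alpha ^ 2 := by
            have hnr : Complex.normSq r = ρ ^ 2 := by
              rw [hr, Complex.normSq_mul, Complex.normSq_I, Complex.normSq_ofReal]
              ring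
            rw [hnr, hρ, div_pow, Real.sq_sqrt hSpos.le]
            field_simp
    · intro s
      set τ : ℂ := r + (s : ℂ) * (1 - r) with hτdef
      have hcomb : r • v + (s : ℂ) • ((1 - r) • v) = τ • v := by
        rw [smul_smul, ← add_smul]
      have hτ : τ ≠ 0 := by
        intro h
        rw [hτdef, hr] at h
        have hre := congrArg Complex.re h
        have him := congrArg Complex.im h
        simp only [Complex.add_re, Complex.add_im, Complex.mul_re, Complex.mul_im,
          Complex.I_re, Complex.I_im, Complex.ofReal_re, Complex.ofReal_im,
          Complex.sub_re, Complex.sub_im, Complex.one_re, Complex.one_im,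
          Complex.zero_re, Complex.zero_im] at hre him
        ring_nf at hre him
        rw [hre] at him
        ring_nf at him
        have hpos2 : 0 < alpha * (Real.sqrt Sv)⁻¹ := mul_pos hpos (inv_pos.mpr hsq)
        nlinarith [hpos2, him]
      rw [hcomb]
      constructor
      · rw [Stmt8Aux.rank_smul hτ]
        exact hrank
      · refine ⟨lam, hlam, ?_⟩
        intro μ hmem
        obtain ⟨x, hx, hMx⟩ := (Stmt8Aux.mem_spectrum_iff_eigen _ _).1 hmem
        rw [Matrix.smul_mulVec] at hMx
        have hvx : v *ᵥ x = (τ⁻¹ * μ) • x := by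
          have h2 : τ⁻¹ • (τ • (v *ᵥ x)) = τ⁻¹ • (μ • x) := by rw [hMx]
          rw [smul_smul, smul_smul, inv_mul_cancel₀ hτ, one_smul] at h2
          exact h2
        have h0 : τ⁻¹ * μ = 0 :=
          hcase _ ((Stmt8Aux.mem_spectrum_iff_eigen _ _).2 ⟨x, hx, hvx⟩)
        have hμ0 : μ = 0 := by
          rcases mul_eq_zero.mp h0 with h' | h'
          · exact absurd h' (inv_ne_zero hτ)
          · exact h'
        right; right; exact hμ0
  · -- non-nilpotent case
    push_neg at hcase
    obtain ⟨μ₀, hμ₀mem, hμ₀ne⟩ := hcase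
    have habs : ‖μ₀‖ = alpha := by
      have h := hspec hμ₀mem
      simp only [Set.mem_insert_iff, Set.mem_singleton_iff] at h
      rcases h with h | h | h
      · rw [h]; exact hlam
      · rw [h, norm_neg]; exact hlam
      · exact absurd h hμ₀ne
    obtain ⟨a, ha, heig⟩ := (Stmt8Aux.mem_spectrum_iff_eigen _ _).1 hμ₀mem
    have haa : a ⬝ᵥ a = 0 := by
      have h1 := Stmt8Aux.skewdot hskew a a
      have h2 : a ⬝ᵥ (v *ᵥ a) = μ₀ * (a ⬝ᵥ a) := by
        rw [heig, dotProduct_smul, smul_eq_mul]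
      rw [h2] at h1
      have h3 : (2:ℂ) * (μ₀ * (a ⬝ᵥ a)) = 0 := by linear_combination h1
      rcases mul_eq_zero.mp h3 with h' | h'
      · norm_num at h'
      rcases mul_eq_zero.mp h' with h' | h'
      · exact absurd h' hμ₀ne
      · exact h'
    obtain ⟨b, hv⟩ := Stmt8Aux.structure_lemma v hskew hrank ha hμ₀ne heig
    have hveq : v = Matrix.of fun i j => a i * b j - b i * a j := by
      ext i j; exact hv i j
    have hba : b ⬝ᵥ a = μ₀ := by
      have h1 : v *ᵥ a = (b ⬝ᵥ a) • a - (a ⬝ᵥ a) • b := by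
        rw [hveq]; exact Stmt8Aux.pair_mulVec a b a
      rw [haa, zero_smul, sub_zero, heig] at h1
      obtain ⟨i₁, hi₁⟩ := Function.ne_iff.mp ha
      have h2 := congrFun h1 i₁
      simp only [Pi.smul_apply, smul_eq_mul] at h2
      exact (mul_right_cancel₀ hi₁ h2).symm
    have hab : a ⬝ᵥ b = μ₀ := by rw [dotProduct_comm]; exact hba
    set na : ℝ := ∑ i, Complex.normSq (a i) with hna
    have hnapos : 0 < na := by
      rw [hna]
      apply Finset.sum_pos'
      · intro i _; exact Complex.normSq_nonneg _
      · obtain ⟨i₁, hi₁⟩ := Function.ne_iff.mp ha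
        exact ⟨i₁, Finset.mem_univ _, Complex.normSq_pos.mpr hi₁⟩
    have hnane : (na : ℂ) ≠ 0 := by exact_mod_cast ne_of_gt hnapos
    set κ : ℂ := μ₀ / (na : ℂ) with hκ
    set c : Fin n → ℂ := fun i => κ * (starRingEnd ℂ) (a i) with hc
    set u : Matrix (Fin n) (Fin n) ℂ := Matrix.of fun i j => a i * c j - c i * a j with hu
    set w : Matrix (Fin n) (Fin n) ℂ := v - u with hw
    have hconj : (a ⬝ᵥ fun i => (starRingEnd ℂ) (a i)) = (na : ℂ) := by
      rw [hna]
      push_cast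
      exact Finset.sum_congr rfl fun i _ => Complex.mul_conj (a i)
    have hac : a ⬝ᵥ c = μ₀ := by
      have h1 : (a ⬝ᵥ c) = κ * (a ⬝ᵥ fun i => (starRingEnd ℂ) (a i)) := by
        simp only [hc, dotProduct, Finset.mul_sum]
        exact Finset.sum_congr rfl fun i _ => by ring
      rw [h1, hconj, hκ, div_mul_cancel₀ _ hnane]
    refine ⟨u, w, ?_, ?_, ?_, ?_, ?_⟩
    · ext i j
      simp only [hu, Matrix.transpose_apply, Matrix.of_apply, Matrix.neg_apply]
      ring
    · ext i j
      simp only [hw, Matrix.transpose_apply, Matrix.sub_apply, Matrix.neg_apply, hu,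
        Matrix.of_apply]
      rw [hskewentry i j]
      ring
    · rw [hw, add_sub_cancel]
    · have huentry : ∀ i j, u i j
          = κ * (a i * (starRingEnd ℂ) (a j) - (starRingEnd ℂ) (a i) * a j) := by
        intro i j
        simp only [hu, Matrix.of_apply, hc]
        ring
      have hsymm : ∀ i j, Complex.normSq (u i j) = Complex.normSq (u j i) := by
        intro i j
        have h1 : u j i = -u i j := by
          simp only [hu, Matrix.of_apply]; ring
        rw [h1, Complex.normSq_neg]
      have hdiag : ∀ i, Complex.normSq (u i i) = 0 := by
        intro i
        have h1 : u i i = 0 := by simp only [hu, Matrix.of_apply]; ring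
        rw [h1, map_zero]
      have hhalf := Stmt8Aux.half_sum (f := fun i j => Complex.normSq (u i j))
        hsymm hdiag
      have htot : ∑ i, ∑ j, Complex.normSq (u i j) = Complex.normSq κ * (2 * na ^ 2) := by
        calc ∑ i, ∑ j, Complex.normSq (u i j)
            = ∑ i, ∑ j, Complex.normSq κ * Complex.normSq
                (a i * (starRingEnd ℂ) (a j) - (starRingEnd ℂ) (a i) * a j) :=
              Finset.sum_congr rfl fun i _ => Finset.sum_congr rfl fun j _ => by
                rw [huentry i j, Complex.normSq_mul]
          _ = Complex.normSq κ * ∑ i, ∑ j, Complex.normSq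
                (a i * (starRingEnd ℂ) (a j) - (starRingEnd ℂ) (a i) * a j) := by
              rw [Finset.mul_sum]
              exact Finset.sum_congr rfl fun i _ => by rw [Finset.mul_sum]
          _ = Complex.normSq κ * (2 * na ^ 2) := by
              rw [Stmt8Aux.key_norm a haa, hna]
      have hS : (∑ i, ∑ j, if i < j then Complex.normSq (u i j) else 0)
          = Complex.normSq κ * na ^ 2 := by
        have := hhalf
        rw [htot] at this
        linarith
      have hκn : Complex.normSq κ = Complex.normSq μ₀ / (na * na) := by
        rw [hκ, Complex.normSq_div, Complex.normSq_ofReal]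
      rw [hS, hκn]
      rw [← Complex.sq_norm, habs]
      field_simp
    · intro s
      set d : Fin n → ℂ := fun i => b i - c i with hd
      set e : Fin n → ℂ := fun i => c i + (s : ℂ) * d i with he
      have hMeq : u + (s : ℂ) • w = Matrix.of fun i j => a i * e j - e i * a j := by
        ext i j
        simp only [hu, hw, he, hd, Matrix.add_apply, Matrix.sub_apply, Matrix.smul_apply,
          Matrix.of_apply, smul_eq_mul, hv i j]
        ring
      have hae : a ⬝ᵥ e = μ₀ := by
        have h1 : a ⬝ᵥ e = (a ⬝ᵥ c) + (s:ℂ) * ((a ⬝ᵥ b) - (a ⬝ᵥ c)) := by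
          simp only [he, hd, dotProduct]
          calc ∑ i, a i * (c i + (s:ℂ) * (b i - c i))
              = ∑ i, (a i * c i + (s:ℂ) * (a i * b i - a i * c i)) :=
                Finset.sum_congr rfl fun i _ => by ring
            _ = ∑ i, a i * c i + (s:ℂ) * (∑ i, a i * b i - ∑ i, a i * c i) := by
                rw [Finset.sum_add_distrib, ← Finset.mul_sum, Finset.sum_sub_distrib]
        rw [h1, hac, hab]
        ring
      rw [hMeq]
      exact ⟨Stmt8Aux.rank_pair haa hae hμ₀ne, μ₀, habs, Stmt8Aux.spec_pair haa hae hμ₀ne⟩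
end
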